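/- arXiv:2512.16115 — 5 statements merged into one kernel-verified Lean document; each statement's English description precedes it below -/
import Mathlib

section
/- Let Y be a real random variable on a probability space with 𝔼[e^Y] = 1, 𝔼[|Y|] < ∞ and 𝔼[|Y| e^Y] < ∞, and let r ∈ ℝ, T > 0. Define the European call price as a function of log-strike k by V(k) = e^{−rT} 𝔼[(e^{rT+Y} − e^k)^+], and the Carr–Madan modified price V̂(k) = V(k) − e^{−rT}(e^{rT} − e^k)^+. Then V̂ is integrable on ℝ and for every real z ≠ 0 its Fourier transform satisfies ∫_ℝ e^{izk} V̂(k) dk = (1/(iz(iz+1))) · e^{izrT} · (𝔼[e^{(1+iz)Y}] − 1). -/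
open MeasureTheory Complex Real Set

/-- The Carr–Madan payoff kernel. -/
noncomputable def cmG (y x : ℝ) : ℝ :=
  if 0 ≤ x then max (Real.exp y - Real.exp x) 0 else max (Real.exp x - Real.exp y) 0

lemma cmG_nonneg (y x : ℝ) : 0 ≤ cmG y x := by
  unfold cmG; split <;> exact le_max_right _ _

lemma cmG_eq_indicator_of_nonneg {y : ℝ} (hy : 0 ≤ y) :
    cmG y = Set.indicator (Set.Icc 0 y) (fun x => Real.exp y - Real.exp x) := by
  funext x
  by_cases hx : x ∈ Set.Icc 0 y
  · rw [Set.indicator_of_mem hx]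
    unfold cmG
    rw [if_pos hx.1, max_eq_left (sub_nonneg.2 (Real.exp_le_exp.2 hx.2))]
  · rw [Set.indicator_of_notMem hx]
    unfold cmG
    simp only [Set.mem_Icc, not_and, not_le] at hx
    by_cases h0 : 0 ≤ x
    · rw [if_pos h0, max_eq_right (sub_nonpos.2 (Real.exp_le_exp.2 (hx h0).le))]
    · rw [if_neg h0, max_eq_right (sub_nonpos.2 (Real.exp_le_exp.2 (le_trans (not_le.1 h0).le hy)))]

lemma cmG_eq_indicator_of_neg {y : ℝ} (hy : y < 0) :
    cmG y = Set.indicator (Set.Ico y 0) (fun x => Real.exp x - Real.exp y) := by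
  funext x
  by_cases hx : x ∈ Set.Ico y 0
  · rw [Set.indicator_of_mem hx]
    unfold cmG
    rw [if_neg (not_le.2 hx.2), max_eq_left (sub_nonneg.2 (Real.exp_le_exp.2 hx.1))]
  · rw [Set.indicator_of_notMem hx]
    unfold cmG
    simp only [Set.mem_Ico, not_and, not_lt] at hx
    by_cases h0 : 0 ≤ x
    · rw [if_pos h0, max_eq_right (sub_nonpos.2 (Real.exp_le_exp.2 (le_trans hy.le h0)))]
    · rw [if_neg h0, max_eq_right (sub_nonpos.2 (Real.exp_le_exp.2 (not_le.1 fun h => h0 (hx h)).le))]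

lemma cmG_le_indicator (y x : ℝ) :
    cmG y x ≤ Set.indicator (Set.uIcc 0 y) (fun _ => Real.exp y + 1) x := by
  rcases le_or_gt 0 y with hy | hy
  · rw [cmG_eq_indicator_of_nonneg hy]
    rw [Set.uIcc_of_le hy]
    by_cases hx : x ∈ Set.Icc 0 y
    · rw [Set.indicator_of_mem hx, Set.indicator_of_mem hx]
      have := Real.exp_pos x
      nlinarith
    · rw [Set.indicator_of_notMem hx, Set.indicator_of_notMem hx]
  · rw [cmG_eq_indicator_of_neg hy, Set.uIcc_of_ge hy.le]
    by_cases hx : x ∈ Set.Ico y 0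
    · rw [Set.indicator_of_mem hx,
        Set.indicator_of_mem (Set.Ico_subset_Icc_self hx)]
      have h1 : Real.exp x ≤ 1 := Real.exp_le_one_iff.2 hx.2.le
      have := Real.exp_pos y
      nlinarith
    · rw [Set.indicator_of_notMem hx]
      by_cases hx' : x ∈ Set.Icc y 0
      · rw [Set.indicator_of_mem hx']
        positivity
      · rw [Set.indicator_of_notMem hx']

lemma indicator_uIcc_integrable (y c : ℝ) :
    Integrable (Set.indicator (Set.uIcc 0 y) (fun _ => c)) volume := by
  rw [integrable_indicator_iff measurableSet_uIcc]
  exact integrableOn_const (by rw [Real.volume_interval]; exact ENNReal.ofReal_ne_top)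

lemma cmG_measurable (y : ℝ) : Measurable (cmG y) := by
  unfold cmG
  exact Measurable.ite (measurableSet_le measurable_const measurable_id)
    ((measurable_const.sub Real.measurable_exp).max measurable_const)
    ((Real.measurable_exp.sub measurable_const).max measurable_const)

lemma cmG_measurable2 : Measurable (fun p : ℝ × ℝ => cmG p.1 p.2) := by
  unfold cmG
  exact Measurable.ite (measurableSet_le measurable_const measurable_snd)
    (((Real.continuous_exp.comp continuous_fst).sub
      (Real.continuous_exp.comp continuous_snd)).max continuous_const).measurable
    (((Real.continuous_exp.comp continuous_snd).sub
      (Real.continuous_exp.comp continuous_fst)).max continuous_const).measurable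

lemma cmG_integrable (y : ℝ) : Integrable (cmG y) volume := by
  refine Integrable.mono' (indicator_uIcc_integrable y (Real.exp y + 1))
    (cmG_measurable y).aestronglyMeasurable (Filter.Eventually.of_forall fun x => ?_)
  rw [Real.norm_eq_abs, _root_.abs_of_nonneg (cmG_nonneg y x)]
  exact cmG_le_indicator y x

lemma cmG_integral_norm_le (y : ℝ) :
    (∫ x, ‖cmG y x‖) ≤ (Real.exp y + 1) * |y| := by
  have h1 : (∫ x, ‖cmG y x‖) ≤ ∫ x, Set.indicator (Set.uIcc 0 y) (fun _ => Real.exp y + 1) x := by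
    refine integral_mono (cmG_integrable y).norm (indicator_uIcc_integrable y _) fun x => ?_
    rw [Real.norm_eq_abs, _root_.abs_of_nonneg (cmG_nonneg y x)]
    exact cmG_le_indicator y x
  refine h1.trans ?_
  rw [integral_indicator_const _ measurableSet_uIcc, Real.volume_real_interval, smul_eq_mul]
  rw [sub_zero]
  ring_nf
  exact le_refl _

lemma izne {z : ℝ} (hz : z ≠ 0) : Complex.I * z ≠ 0 := by
  simp [Complex.I_ne_zero, hz]

lemma izone {z : ℝ} (hz : z ≠ 0) : 1 + Complex.I * z ≠ 0 := by
  intro h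
  have := congrArg Complex.re h
  simp at this

lemma cmG_fourier {z : ℝ} (hz : z ≠ 0) (y : ℝ) :
    ∫ x : ℝ, Complex.exp (Complex.I * z * x) * (cmG y x : ℂ) =
      (Complex.exp ((1 + Complex.I * z) * y) - Complex.exp (y : ℂ)) / (Complex.I * z)
        - (Complex.exp ((1 + Complex.I * z) * y) - 1) / (1 + Complex.I * z) := by
  have hiz := izne hz
  have hiz1 := izone hz
  have key : ∀ a b : ℝ, (∫ x in a..b, Complex.exp (Complex.I * z * x) *
      ((Real.exp b : ℂ) - (Real.exp x : ℂ))) =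
      Complex.exp (b : ℂ) * ((Complex.exp (Complex.I * z * b) - Complex.exp (Complex.I * z * a))
        / (Complex.I * z))
      - (Complex.exp ((1 + Complex.I * z) * b) - Complex.exp ((1 + Complex.I * z) * a))
        / (1 + Complex.I * z) := by
    intro a b
    have h1 : (∫ x in a..b, Complex.exp (Complex.I * z * x) *
        ((Real.exp b : ℂ) - (Real.exp x : ℂ))) =
        (∫ x in a..b, (Real.exp b : ℂ) * Complex.exp (Complex.I * z * x))
          - ∫ x in a..b, Complex.exp ((1 + Complex.I * z) * x) := by
      have hpt : ∀ x : ℝ, Complex.exp (Complex.I * z * x) *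
          ((Real.exp b : ℂ) - (Real.exp x : ℂ)) =
          (Real.exp b : ℂ) * Complex.exp (Complex.I * z * x)
            - Complex.exp ((1 + Complex.I * z) * x) := by
        intro x
        rw [show ((1 : ℂ) + Complex.I * z) * x = Complex.I * z * x + x by ring,
          Complex.exp_add]
        simp only [Complex.ofReal_exp]
        ring
      rw [← intervalIntegral.integral_sub]
      · exact intervalIntegral.integral_congr fun x _ => hpt x
      · exact (Continuous.intervalIntegrable (by continuity) _ _)
      · exact (Continuous.intervalIntegrable (by continuity) _ _)
    rw [h1, intervalIntegral.integral_const_mul, integral_exp_mul_complex hiz,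
      integral_exp_mul_complex hiz1, Complex.ofReal_exp]
  rcases le_or_gt 0 y with hy | hy
  · have hind : (fun x : ℝ => Complex.exp (Complex.I * z * x) * (cmG y x : ℂ)) =
        Set.indicator (Set.Icc 0 y)
          (fun x => Complex.exp (Complex.I * z * x) * ((Real.exp y : ℂ) - (Real.exp x : ℂ))) := by
      funext x
      rw [cmG_eq_indicator_of_nonneg hy]
      by_cases hx : x ∈ Set.Icc 0 y
      · rw [Set.indicator_of_mem hx, Set.indicator_of_mem hx]; push_cast; ring
      · rw [Set.indicator_of_notMem hx, Set.indicator_of_notMem hx]; simp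
    rw [hind, integral_indicator measurableSet_Icc, integral_Icc_eq_integral_Ioc,
      ← intervalIntegral.integral_of_le hy, key 0 y]
    rw [show ((1 : ℂ) + Complex.I * z) * y = y + Complex.I * z * y by ring, Complex.exp_add]
    simp only [Complex.ofReal_zero, mul_zero, Complex.exp_zero]
    field_simp
  · have hind : (fun x : ℝ => Complex.exp (Complex.I * z * x) * (cmG y x : ℂ)) =
        Set.indicator (Set.Ico y 0)
          (fun x => -(Complex.exp (Complex.I * z * x) *
            ((Real.exp y : ℂ) - (Real.exp x : ℂ)))) := by
      funext x
      rw [cmG_eq_indicator_of_neg hy]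
      by_cases hx : x ∈ Set.Ico y 0
      · rw [Set.indicator_of_mem hx, Set.indicator_of_mem hx]; push_cast; ring
      · rw [Set.indicator_of_notMem hx, Set.indicator_of_notMem hx]; simp
    rw [hind, integral_indicator measurableSet_Ico, integral_Ico_eq_integral_Ioo,
      ← integral_Ioc_eq_integral_Ioo, ← intervalIntegral.integral_of_le hy.le,
      intervalIntegral.integral_neg, intervalIntegral.integral_symm 0 y, neg_neg, key 0 y]
    rw [show ((1 : ℂ) + Complex.I * z) * y = y + Complex.I * z * y by ring, Complex.exp_add]
    simp only [Complex.ofReal_zero, mul_zero, Complex.exp_zero]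
    field_simp

/-- Carr–Madan Fourier transform of the modified European call price. -/
theorem carrMadan_european
    {Ω : Type*} [MeasurableSpace Ω] (μ : Measure Ω) [IsProbabilityMeasure μ]
    (Y : Ω → ℝ) (hYm : Measurable Y)
    (hYint : Integrable Y μ)
    (hexpYint : Integrable (fun ω => Real.exp (Y ω)) μ)
    (hmart : ∫ ω, Real.exp (Y ω) ∂μ = 1)
    (hYexpYint : Integrable (fun ω => |Y ω| * Real.exp (Y ω)) μ)
    (r T : ℝ) (hT : 0 < T)
    (V Vhat : ℝ → ℝ)
    (hV : ∀ k, V k = Real.exp (-(r * T)) *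
      ∫ ω, max (Real.exp (r * T + Y ω) - Real.exp k) 0 ∂μ)
    (hVhat : ∀ k, Vhat k = V k -
      Real.exp (-(r * T)) * max (Real.exp (r * T) - Real.exp k) 0) :
    Integrable Vhat volume ∧
      ∀ z : ℝ, z ≠ 0 →
        ∫ k : ℝ, Complex.exp (Complex.I * z * k) * (Vhat k : ℂ) =
          (1 / (Complex.I * z * (Complex.I * z + 1))) *
            Complex.exp (Complex.I * z * (r * T)) *
            ((∫ ω, Complex.exp ((1 + Complex.I * z) * (Y ω : ℂ)) ∂μ) - 1) := by
  set m := r * T with hm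
  have hmeasmax : ∀ k : ℝ, Measurable fun ω => max (Real.exp (m + Y ω) - Real.exp k) 0 :=
    fun k => ((Real.measurable_exp.comp (measurable_const.add hYm)).sub
      measurable_const).max measurable_const
  have hImYe : Integrable (fun ω => Real.exp (m + Y ω)) μ := by
    simp only [Real.exp_add]
    exact hexpYint.const_mul _
  have hEmY : ∫ ω, Real.exp (m + Y ω) ∂μ = Real.exp m := by
    simp only [Real.exp_add]
    rw [integral_const_mul, hmart, mul_one]
  have hI1 : ∀ k : ℝ, Integrable (fun ω => max (Real.exp (m + Y ω) - Real.exp k) 0) μ := by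
    intro k
    refine hImYe.mono' (hmeasmax k).aestronglyMeasurable
      (Filter.Eventually.of_forall fun ω => ?_)
    rw [Real.norm_eq_abs, _root_.abs_of_nonneg (le_max_right _ _)]
    exact max_le (by linarith [Real.exp_pos k]) (Real.exp_pos _).le
  have hI2 : ∀ k : ℝ, Integrable (fun ω => max (Real.exp k - Real.exp (m + Y ω)) 0) μ := by
    intro k
    refine (integrable_const (Real.exp k)).mono'
      ((measurable_const.sub (Real.measurable_exp.comp
        (measurable_const.add hYm))).max measurable_const).aestronglyMeasurable
      (Filter.Eventually.of_forall fun ω => ?_)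
    rw [Real.norm_eq_abs, _root_.abs_of_nonneg (le_max_right _ _)]
    exact max_le (by linarith [Real.exp_pos (m + Y ω)]) (Real.exp_pos _).le
  have hA : ∀ k, Vhat k = ∫ ω, cmG (Y ω) (k - m) ∂μ := by
    intro k
    rcases le_or_gt m k with hk | hk
    · rw [hVhat, hV, max_eq_right (sub_nonpos.2 (Real.exp_le_exp.2 hk)), mul_zero, sub_zero,
        ← integral_const_mul]
      refine integral_congr_ae (Filter.Eventually.of_forall fun ω => ?_)
      simp only [cmG]
      rw [if_pos (sub_nonneg.2 hk), mul_max_of_nonneg _ _ (Real.exp_pos (-m)).le, mul_zero]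
      congr 1
      have e1 : -m + (m + Y ω) = Y ω := by ring
      have e2 : -m + k = k - m := by ring
      rw [mul_sub, ← Real.exp_add, ← Real.exp_add, e1, e2]
    · have hmax1 : max (Real.exp m - Real.exp k) 0 = Real.exp m - Real.exp k :=
        max_eq_left (sub_nonneg.2 (Real.exp_le_exp.2 hk.le))
      have hsplit : (fun ω => max (Real.exp (m + Y ω) - Real.exp k) 0)
          = fun ω => (Real.exp (m + Y ω) - Real.exp k)
            + max (Real.exp k - Real.exp (m + Y ω)) 0 := by
        funext ω
        rcases le_total (Real.exp (m + Y ω)) (Real.exp k) with h | h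
        · rw [max_eq_right (by linarith), max_eq_left (by linarith)]; ring
        · rw [max_eq_left (by linarith), max_eq_right (by linarith)]; ring
      have hint1 : Integrable (fun ω => Real.exp (m + Y ω) - Real.exp k) μ :=
        hImYe.sub (integrable_const _)
      have hEsum : ∫ ω, max (Real.exp (m + Y ω) - Real.exp k) 0 ∂μ
          = (Real.exp m - Real.exp k) + ∫ ω, max (Real.exp k - Real.exp (m + Y ω)) 0 ∂μ := by
        rw [hsplit, integral_add hint1 (hI2 k),
          integral_sub hImYe (integrable_const _), integral_const, measureReal_def, measure_univ, hEmY]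
        simp
      rw [hVhat, hV, hmax1, hEsum]
      rw [show ∀ a b c : ℝ, a * (b + c) - a * b = a * c from fun a b c => by ring]
      rw [← integral_const_mul]
      refine integral_congr_ae (Filter.Eventually.of_forall fun ω => ?_)
      simp only [cmG]
      rw [if_neg (not_le.2 (sub_neg.2 hk)), mul_max_of_nonneg _ _ (Real.exp_pos (-m)).le,
        mul_zero]
      congr 1
      have e1 : -m + (m + Y ω) = Y ω := by ring
      have e2 : -m + k = k - m := by ring
      rw [mul_sub, ← Real.exp_add, ← Real.exp_add, e1, e2]
  -- product integrability
  have hFmeas : Measurable fun p : ℝ × Ω => cmG (Y p.2) (p.1 - m) :=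
    cmG_measurable2.comp ((hYm.comp measurable_snd).prodMk (measurable_fst.sub measurable_const))
  have hbound : Integrable (fun ω => (Real.exp (Y ω) + 1) * |Y ω|) μ := by
    have h : (fun ω => (Real.exp (Y ω) + 1) * |Y ω|)
        = fun ω => |Y ω| * Real.exp (Y ω) + |Y ω| := by funext ω; ring
    rw [h]; exact hYexpYint.add hYint.abs
  have hJ : StronglyMeasurable fun y : ℝ => ∫ x, ‖cmG y x‖ :=
    MeasureTheory.StronglyMeasurable.integral_prod_right (f := fun y x => ‖cmG y x‖)
      (cmG_measurable2.norm.stronglyMeasurable)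
  have hshift : ∀ y : ℝ, (∫ k, ‖cmG y (k - m)‖) = ∫ x, ‖cmG y x‖ := fun y =>
    integral_sub_right_eq_self (fun x => ‖cmG y x‖) m
  have hFint : Integrable (fun p : ℝ × Ω => cmG (Y p.2) (p.1 - m)) (volume.prod μ) := by
    refine (integrable_prod_iff' hFmeas.aestronglyMeasurable).2
      ⟨Filter.Eventually.of_forall fun ω => (cmG_integrable (Y ω)).comp_sub_right m, ?_⟩
    refine hbound.mono' ?_ (Filter.Eventually.of_forall fun ω => ?_)
    · have h : (fun ω => ∫ k, ‖cmG (Y ω) (k - m)‖) = fun ω => ∫ x, ‖cmG (Y ω) x‖ := by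
        funext ω; exact hshift (Y ω)
      rw [h]
      exact (hJ.measurable.comp hYm).aestronglyMeasurable
    · rw [Real.norm_eq_abs,
        _root_.abs_of_nonneg (integral_nonneg fun x => norm_nonneg _), hshift (Y ω)]
      exact cmG_integral_norm_le (Y ω)
  have hVhatInt : Integrable Vhat volume := by
    have h : Vhat = fun k => ∫ ω, cmG (Y ω) (k - m) ∂μ := funext hA
    rw [h]
    exact hFint.integral_prod_left
  refine ⟨hVhatInt, fun z hz => ?_⟩
  have hiz := izne hz
  have hiz1 := izone hz
  -- integrand on the product space
  have hGmeas : Measurable fun p : ℝ × Ω =>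
      Complex.exp (Complex.I * z * p.1) * (cmG (Y p.2) (p.1 - m) : ℂ) := by
    refine Measurable.mul ?_ (Complex.measurable_ofReal.comp hFmeas)
    exact Complex.measurable_exp.comp
      ((Complex.measurable_ofReal.comp measurable_fst).const_mul (Complex.I * z))
  have hGnorm : ∀ p : ℝ × Ω, ‖Complex.exp (Complex.I * z * p.1)
      * (cmG (Y p.2) (p.1 - m) : ℂ)‖ = ‖cmG (Y p.2) (p.1 - m)‖ := by
    intro p
    rw [norm_mul, Complex.norm_exp]
    have : (Complex.I * z * p.1).re = 0 := by simp
    rw [this, Real.exp_zero, one_mul, Complex.norm_real]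
  have hGint : Integrable (fun p : ℝ × Ω =>
      Complex.exp (Complex.I * z * p.1) * (cmG (Y p.2) (p.1 - m) : ℂ)) (volume.prod μ) := by
    refine hFint.norm.mono' hGmeas.aestronglyMeasurable
      (Filter.Eventually.of_forall fun p => ?_)
    rw [hGnorm p]
  -- integrability for the final expectation step
  have hIexp1 : Integrable (fun ω => Complex.exp ((1 + Complex.I * z) * (Y ω : ℂ))) μ := by
    refine hexpYint.mono' (Complex.measurable_exp.comp
      ((Complex.measurable_ofReal.comp hYm).const_mul (1 + Complex.I * z))).aestronglyMeasurable
      (Filter.Eventually.of_forall fun ω => ?_)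
    rw [Complex.norm_exp]
    have h2 : (((1 : ℂ) + Complex.I * z) * (Y ω : ℂ)).re = Y ω := by simp
    rw [h2]
  have hIexp2 : Integrable (fun ω => Complex.exp ((Y ω : ℂ))) μ := by
    have h : (fun ω => Complex.exp ((Y ω : ℂ))) = fun ω => ((Real.exp (Y ω) : ℝ) : ℂ) := by
      funext ω; rw [Complex.ofReal_exp]
    rw [h]
    exact hexpYint.ofReal
  have hEexp2 : ∫ ω, Complex.exp ((Y ω : ℂ)) ∂μ = 1 := by
    have h0 : ∫ ω, ((Real.exp (Y ω) : ℝ) : ℂ) ∂μ = ((∫ ω, Real.exp (Y ω) ∂μ : ℝ) : ℂ) :=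
      integral_ofReal
    simp only [← Complex.ofReal_exp]
    rw [h0, hmart, Complex.ofReal_one]
  -- main computation
  have step1 : ∫ k : ℝ, Complex.exp (Complex.I * z * k) * (Vhat k : ℂ)
      = ∫ k : ℝ, ∫ ω, Complex.exp (Complex.I * z * k) * (cmG (Y ω) (k - m) : ℂ) ∂μ := by
    refine integral_congr_ae (Filter.Eventually.of_forall fun k => ?_)
    simp only [hA]
    rw [show ((∫ ω, cmG (Y ω) (k - m) ∂μ : ℝ) : ℂ)
        = ∫ ω, ((cmG (Y ω) (k - m) : ℝ) : ℂ) ∂μ from integral_ofReal.symm,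
      ← integral_const_mul]
  have step2 : (∫ k : ℝ, ∫ ω, Complex.exp (Complex.I * z * k)
        * (cmG (Y ω) (k - m) : ℂ) ∂μ)
      = ∫ ω, (∫ k : ℝ, Complex.exp (Complex.I * z * k) * (cmG (Y ω) (k - m) : ℂ)) ∂μ :=
    integral_integral_swap hGint
  have step3 : (∫ ω, (∫ k : ℝ, Complex.exp (Complex.I * z * k)
        * (cmG (Y ω) (k - m) : ℂ)) ∂μ)
      = ∫ ω, Complex.exp (Complex.I * z * m) *
          ((Complex.exp ((1 + Complex.I * z) * (Y ω : ℂ)) - Complex.exp ((Y ω : ℂ)))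
              / (Complex.I * z)
            - (Complex.exp ((1 + Complex.I * z) * (Y ω : ℂ)) - 1) / (1 + Complex.I * z)) ∂μ := by
    refine integral_congr_ae (Filter.Eventually.of_forall fun ω => ?_)
    have h1 : ∀ k : ℝ, Complex.exp (Complex.I * z * k) * (cmG (Y ω) (k - m) : ℂ)
        = Complex.exp (Complex.I * z * m)
          * (Complex.exp (Complex.I * z * ((k - m : ℝ) : ℂ)) * (cmG (Y ω) (k - m) : ℂ)) := by
      intro k
      rw [← mul_assoc, ← Complex.exp_add]
      congr 2
      push_cast
      ring
    simp_rw [h1]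
    rw [integral_const_mul, integral_sub_right_eq_self
      (fun x : ℝ => Complex.exp (Complex.I * z * (x : ℂ)) * (cmG (Y ω) x : ℂ)) m,
      cmG_fourier hz (Y ω)]
  have hd1 : Integrable (fun ω => (Complex.exp ((1 + Complex.I * z) * (Y ω : ℂ))
      - Complex.exp ((Y ω : ℂ))) / (Complex.I * z)) μ := (hIexp1.sub hIexp2).div_const _
  have hd2 : Integrable (fun ω => (Complex.exp ((1 + Complex.I * z) * (Y ω : ℂ)) - 1)
      / (1 + Complex.I * z)) μ := (hIexp1.sub (integrable_const 1)).div_const _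
  rw [step1, step2, step3, integral_const_mul, integral_sub hd1 hd2,
    integral_div, integral_div, integral_sub hIexp1 hIexp2,
    integral_sub hIexp1 (integrable_const 1), integral_const, measureReal_def, measure_univ, hEexp2]
  simp only [ENNReal.toReal_one, one_smul]
  rw [hm]
  set Φ : ℂ := ∫ ω, Complex.exp ((1 + Complex.I * z) * (Y ω : ℂ)) ∂μ with hΦ
  have h3 : Complex.I * z * (Complex.I * z + 1) ≠ 0 :=
    mul_ne_zero hiz (by rw [add_comm]; exact hiz1)
  push_cast
  have hzc : (z : ℂ) ≠ 0 := by exact_mod_cast hz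
  have hiz1' : Complex.I * z + 1 ≠ 0 := by rw [add_comm]; exact hiz1
  field_simp [h3, hzc, hiz1']
  ring
end

section
/- Let Y be a real random variable on a probability space with 𝔼[|Y|] < ∞, and let r ∈ ℝ, T > 0. Define the digital (cash-or-nothing) call price as a function of log-strike k by V(k) = e^{−rT} ℙ(rT + Y ≥ k), and the Carr–Madan modified price V̂(k) = V(k) − e^{−rT} 1_{{k ≤ rT}}. Then V̂ is integrable on ℝ and for every real z ≠ 0 its Fourier transform satisfies ∫_ℝ e^{izk} V̂(k) dk = (1/(iz)) · e^{(iz−1)rT} · (𝔼[e^{izY}] − 1). -/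
open MeasureTheory Complex Real

lemma aux_D_eq (y a : ℝ) (f : ℝ → ℂ) :
    f a * (((if a ≤ y then (1:ℝ) else 0) - (if a ≤ 0 then 1 else 0) : ℝ) : ℂ) =
      Set.indicator (Set.Ioc 0 y) f a - Set.indicator (Set.Ioc y 0) f a := by
  rcases le_or_gt a 0 with h2 | h2 <;> rcases le_or_gt a y with h1 | h1
  · rw [if_pos h1, if_pos h2,
      Set.indicator_of_notMem (fun h => absurd h.1 (not_lt.2 h2)),
      Set.indicator_of_notMem (fun h => absurd h.1 (not_lt.2 h1))]
    simp
  · rw [if_neg (not_le.2 h1), if_pos h2,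
      Set.indicator_of_notMem (fun h => absurd h.1 (not_lt.2 h2)),
      Set.indicator_of_mem (Set.mem_Ioc.2 ⟨h1, h2⟩)]
    push_cast; ring
  · rw [if_pos h1, if_neg (not_le.2 h2),
      Set.indicator_of_mem (Set.mem_Ioc.2 ⟨h2, h1⟩),
      Set.indicator_of_notMem (fun h => absurd h.2 (not_le.2 h2))]
    push_cast; ring
  · rw [if_neg (not_le.2 h1), if_neg (not_le.2 h2),
      Set.indicator_of_notMem (fun h => absurd h.2 (not_le.2 h1)),
      Set.indicator_of_notMem (fun h => absurd h.2 (not_le.2 h2))]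
    simp

lemma aux_abs_eq (y a : ℝ) :
    |(if a ≤ y then (1:ℝ) else 0) - (if a ≤ 0 then 1 else 0)| =
      Set.indicator (Set.Ioc 0 y) (fun _ => (1:ℝ)) a + Set.indicator (Set.Ioc y 0) (fun _ => (1:ℝ)) a := by
  rcases le_or_gt a 0 with h2 | h2 <;> rcases le_or_gt a y with h1 | h1
  · rw [if_pos h1, if_pos h2,
      Set.indicator_of_notMem (fun h => absurd h.1 (not_lt.2 h2)),
      Set.indicator_of_notMem (fun h => absurd h.1 (not_lt.2 h1))]
    simp
  · rw [if_neg (not_le.2 h1), if_pos h2,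
      Set.indicator_of_notMem (fun h => absurd h.1 (not_lt.2 h2)),
      Set.indicator_of_mem (Set.mem_Ioc.2 ⟨h1, h2⟩)]
    norm_num
  · rw [if_pos h1, if_neg (not_le.2 h2),
      Set.indicator_of_mem (Set.mem_Ioc.2 ⟨h2, h1⟩),
      Set.indicator_of_notMem (fun h => absurd h.2 (not_le.2 h2))]
    norm_num
  · rw [if_neg (not_le.2 h1), if_neg (not_le.2 h2),
      Set.indicator_of_notMem (fun h => absurd h.2 (not_le.2 h1)),
      Set.indicator_of_notMem (fun h => absurd h.2 (not_le.2 h2))]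
    simp

lemma aux_abs (y : ℝ) : ∫ a : ℝ, |(if a ≤ y then (1:ℝ) else 0) - (if a ≤ 0 then 1 else 0)| = |y| := by
  simp_rw [aux_abs_eq y]
  rw [integral_add
      ((integrable_indicator_iff measurableSet_Ioc).2 (integrableOn_const measure_Ioc_lt_top.ne))
      ((integrable_indicator_iff measurableSet_Ioc).2 (integrableOn_const measure_Ioc_lt_top.ne)),
    MeasureTheory.integral_indicator_const (1:ℝ) measurableSet_Ioc,
    MeasureTheory.integral_indicator_const (1:ℝ) measurableSet_Ioc]
  rcases le_or_gt 0 y with hy | hy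
  · rw [Set.Ioc_eq_empty (not_lt.2 hy : ¬ y < 0)]
    simp [Real.volume_Ioc, ENNReal.toReal_ofReal hy, _root_.abs_of_nonneg hy, hy]
  · rw [Set.Ioc_eq_empty (not_lt.2 hy.le : ¬ (0:ℝ) < y)]
    simp [Real.volume_Ioc, ENNReal.toReal_ofReal (by linarith : (0:ℝ) ≤ 0 - y), _root_.abs_of_neg hy]
    linarith

lemma aux_slice (z y : ℝ) (hz : z ≠ 0) :
    ∫ a : ℝ, Complex.exp (Complex.I * z * a) *
        (((if a ≤ y then (1:ℝ) else 0) - (if a ≤ 0 then 1 else 0) : ℝ) : ℂ)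
      = (Complex.exp (Complex.I * z * y) - 1) / (Complex.I * z) := by
  have hiz : (Complex.I * (z:ℂ)) ≠ 0 :=
    mul_ne_zero Complex.I_ne_zero (Complex.ofReal_ne_zero.2 hz)
  have hcont : Continuous fun a : ℝ => Complex.exp (Complex.I * z * a) :=
    Complex.continuous_exp.comp (continuous_const.mul Complex.continuous_ofReal)
  simp_rw [aux_D_eq y _ (fun a : ℝ => Complex.exp (Complex.I * z * a))]
  rw [integral_sub
      ((integrable_indicator_iff measurableSet_Ioc).2 (hcont.integrableOn_Ioc))
      ((integrable_indicator_iff measurableSet_Ioc).2 (hcont.integrableOn_Ioc)),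
    integral_indicator measurableSet_Ioc, integral_indicator measurableSet_Ioc]
  have hdef : (∫ a in Set.Ioc (0:ℝ) y, Complex.exp (Complex.I * z * a)) -
      (∫ a in Set.Ioc y (0:ℝ), Complex.exp (Complex.I * z * a)) =
      ∫ a in (0:ℝ)..y, Complex.exp (Complex.I * z * a) := rfl
  rw [hdef, integral_exp_mul_complex hiz]
  simp

lemma aux_core {Ω : Type*} [MeasurableSpace Ω] (μ : Measure Ω) [IsProbabilityMeasure μ]
    (Y : Ω → ℝ) (hYm : Measurable Y) (hYint : Integrable Y μ) :
    Integrable (fun a => (μ {ω | a ≤ Y ω}).toReal - (if a ≤ 0 then (1:ℝ) else 0)) volume ∧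
      ∀ z : ℝ, z ≠ 0 →
        ∫ a : ℝ, Complex.exp (Complex.I * z * a) *
            (((μ {ω | a ≤ Y ω}).toReal - (if a ≤ 0 then (1:ℝ) else 0) : ℝ) : ℂ)
          = (1 / (Complex.I * z)) * ((∫ ω, Complex.exp (Complex.I * z * (Y ω : ℂ)) ∂μ) - 1) := by
  set D : Ω × ℝ → ℝ :=
    fun p => (if p.2 ≤ Y p.1 then (1:ℝ) else 0) - (if p.2 ≤ 0 then 1 else 0) with hD
  have hsetm : ∀ a : ℝ, MeasurableSet {ω | a ≤ Y ω} := fun a => hYm measurableSet_Ici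
  have hDm : Measurable D := by
    apply Measurable.sub
    · exact Measurable.ite (measurableSet_le measurable_snd (hYm.comp measurable_fst))
        measurable_const measurable_const
    · exact Measurable.ite (measurableSet_le measurable_snd measurable_const)
        measurable_const measurable_const
  -- slice integrability
  have hslice : ∀ ω, Integrable (fun a => D (ω, a)) volume := by
    intro ω
    have hm : Measurable fun a : ℝ => D (ω, a) := hDm.comp measurable_prodMk_left
    rw [← integrable_norm_iff hm.aestronglyMeasurable]
    have : (fun a => ‖D (ω, a)‖) = fun a =>
        Set.indicator (Set.Ioc 0 (Y ω)) (fun _ => (1:ℝ)) a +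
        Set.indicator (Set.Ioc (Y ω) 0) (fun _ => (1:ℝ)) a := by
      funext a; rw [Real.norm_eq_abs]; exact aux_abs_eq (Y ω) a
    rw [this]
    exact ((integrable_indicator_iff measurableSet_Ioc).2
        (integrableOn_const measure_Ioc_lt_top.ne)).add
      ((integrable_indicator_iff measurableSet_Ioc).2
        (integrableOn_const measure_Ioc_lt_top.ne))
  have habsint : ∀ ω, ∫ a : ℝ, ‖D (ω, a)‖ = |Y ω| := by
    intro ω
    simp_rw [Real.norm_eq_abs]
    exact aux_abs (Y ω)
  have hDint : Integrable D (μ.prod volume) := by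
    rw [integrable_prod_iff hDm.aestronglyMeasurable]
    refine ⟨Filter.Eventually.of_forall hslice, ?_⟩
    have : (fun ω => ∫ a : ℝ, ‖D (ω, a)‖) = fun ω => |Y ω| := funext habsint
    rw [this]
    exact hYint.abs
  have hg_eq : ∀ a : ℝ, ((μ {ω | a ≤ Y ω}).toReal - (if a ≤ 0 then (1:ℝ) else 0))
      = ∫ ω, D (ω, a) ∂μ := by
    intro a
    have h1 : (fun ω => if a ≤ Y ω then (1:ℝ) else 0)
        = Set.indicator {ω | a ≤ Y ω} (fun _ => (1:ℝ)) := by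
      funext ω; simp [Set.indicator_apply, Set.mem_setOf_eq]
    have h2 : ∫ ω, (if a ≤ Y ω then (1:ℝ) else 0) ∂μ = (μ {ω | a ≤ Y ω}).toReal := by
      rw [h1, MeasureTheory.integral_indicator_const (1:ℝ) (hsetm a)]
      simp [measureReal_def]
    have hint1 : Integrable (fun ω => if a ≤ Y ω then (1:ℝ) else 0) μ := by
      rw [h1]
      exact (integrable_const (1:ℝ)).indicator (hsetm a)
    rw [show (fun ω => D (ω, a)) = fun ω =>
        (if a ≤ Y ω then (1:ℝ) else 0) - (if a ≤ 0 then (1:ℝ) else 0) from rfl,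
      integral_sub hint1 (integrable_const _), h2, integral_const]
    try simp
  constructor
  · have : (fun a => (μ {ω | a ≤ Y ω}).toReal - (if a ≤ 0 then (1:ℝ) else 0))
        = fun a => ∫ ω, D (ω, a) ∂μ := funext hg_eq
    rw [this]
    exact hDint.integral_prod_right
  · intro z hz
    have hiz : (Complex.I * (z:ℂ)) ≠ 0 :=
      mul_ne_zero Complex.I_ne_zero (Complex.ofReal_ne_zero.2 hz)
    set F : Ω → ℝ → ℂ := fun ω a => Complex.exp (Complex.I * z * a) * (D (ω, a) : ℂ) with hF
    have hFm : Measurable (Function.uncurry F) := by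
      apply Measurable.mul
      · exact Complex.measurable_exp.comp
          (measurable_const.mul (Complex.measurable_ofReal.comp measurable_snd))
      · exact Complex.measurable_ofReal.comp hDm
    have hFnorm : ∀ p : Ω × ℝ, ‖Function.uncurry F p‖ = ‖D p‖ := by
      rintro ⟨ω, a⟩
      simp only [Function.uncurry, hF, norm_mul, Complex.norm_exp,
        Complex.norm_real, Real.norm_eq_abs]
      simp
    have hFint : Integrable (Function.uncurry F) (μ.prod volume) := by
      refine Integrable.mono' hDint.norm hFm.aestronglyMeasurable
        (Filter.Eventually.of_forall fun p => ?_)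
      rw [hFnorm p]
    have hΦint : Integrable (fun ω => Complex.exp (Complex.I * z * (Y ω : ℂ))) μ := by
      refine Integrable.mono' (integrable_const (1:ℝ))
        ((Complex.measurable_exp.comp
          (measurable_const.mul (Complex.measurable_ofReal.comp hYm))).aestronglyMeasurable)
        (Filter.Eventually.of_forall fun ω => ?_)
      simp [Complex.norm_exp]
    calc ∫ a : ℝ, Complex.exp (Complex.I * z * a) *
            (((μ {ω | a ≤ Y ω}).toReal - (if a ≤ 0 then (1:ℝ) else 0) : ℝ) : ℂ)
        = ∫ a : ℝ, (∫ ω, F ω a ∂μ) := by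
          congr 1; funext a
          simp only [hF]
          rw [integral_const_mul, hg_eq a]
          congr 1
          exact (integral_ofReal (f := fun ω => D (ω, a))).symm
      _ = ∫ ω, (∫ a : ℝ, F ω a) ∂μ := (integral_integral_swap hFint).symm
      _ = ∫ ω, (Complex.exp (Complex.I * z * (Y ω : ℂ)) - 1) / (Complex.I * z) ∂μ := by
          congr 1; funext ω
          exact aux_slice z (Y ω) hz
      _ = (1 / (Complex.I * z)) * ((∫ ω, Complex.exp (Complex.I * z * (Y ω : ℂ)) ∂μ) - 1) := by
          simp_rw [div_eq_mul_inv]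
          rw [integral_mul_const, integral_sub hΦint (integrable_const _), integral_const]
          simp [measure_univ]
          try ring

/-- Carr–Madan Fourier transform of the modified digital (cash-or-nothing) call price. -/
theorem carrMadan_digital
    {Ω : Type*} [MeasurableSpace Ω] (μ : Measure Ω) [IsProbabilityMeasure μ]
    (Y : Ω → ℝ) (hYm : Measurable Y)
    (hYint : Integrable Y μ)
    (r T : ℝ) (hT : 0 < T)
    (V Vhat : ℝ → ℝ)
    (hV : ∀ k, V k = Real.exp (-(r * T)) * (μ {ω | k ≤ r * T + Y ω}).toReal)
    (hVhat : ∀ k, Vhat k = V k -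
      Real.exp (-(r * T)) * (if k ≤ r * T then 1 else 0)) :
    Integrable Vhat volume ∧
      ∀ z : ℝ, z ≠ 0 →
        ∫ k : ℝ, Complex.exp (Complex.I * z * k) * (Vhat k : ℂ) =
          (1 / (Complex.I * z)) * Complex.exp ((Complex.I * z - 1) * (r * T)) *
            ((∫ ω, Complex.exp (Complex.I * z * (Y ω : ℂ)) ∂μ) - 1) := by
  obtain ⟨hgInt, hgF⟩ := aux_core μ Y hYm hYint
  set g : ℝ → ℝ := fun a => (μ {ω | a ≤ Y ω}).toReal - (if a ≤ 0 then (1:ℝ) else 0) with hg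
  set c : ℝ := Real.exp (-(r * T)) with hc
  have hVg : ∀ k, Vhat k = c * g (k - r * T) := by
    intro k
    rw [hVhat k, hV k]
    have hset : {ω | k ≤ r * T + Y ω} = {ω | k - r * T ≤ Y ω} := by
      ext ω; simp only [Set.mem_setOf_eq]; constructor <;> intro h <;> linarith
    have hif : (if k ≤ r * T then (1:ℝ) else 0) = (if k - r * T ≤ 0 then 1 else 0) :=
      if_congr (by constructor <;> intro h <;> linarith) rfl rfl
    rw [hset, hif]
    simp only [hg]
    ring
  constructor
  · have hVe : Vhat = fun k => c * g (k - r * T) := funext hVg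
    rw [hVe]
    exact (hgInt.comp_sub_right (r * T)).const_mul c
  · intro z hz
    have hiz : (Complex.I * (z:ℂ)) ≠ 0 :=
      mul_ne_zero Complex.I_ne_zero (Complex.ofReal_ne_zero.2 hz)
    set φ : ℝ → ℂ := fun a =>
      Complex.exp (Complex.I * z * ((a + r * T : ℝ) : ℂ)) * ((c * g a : ℝ) : ℂ) with hφ
    have h1 : ∀ k : ℝ, Complex.exp (Complex.I * z * k) * (Vhat k : ℂ) = φ (k - r * T) := by
      intro k
      simp only [hφ]
      rw [hVg k, sub_add_cancel]
    have h2 : ∀ a : ℝ, φ a =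
        ((c : ℂ) * Complex.exp (Complex.I * z * ((r * T : ℝ) : ℂ))) *
          (Complex.exp (Complex.I * z * (a : ℂ)) * ((g a : ℝ) : ℂ)) := by
      intro a
      simp only [hφ]
      rw [show (Complex.I * z * ((a + r * T : ℝ) : ℂ))
          = Complex.I * z * ((r * T : ℝ) : ℂ) + Complex.I * z * (a : ℂ) by push_cast; ring,
        Complex.exp_add]
      push_cast
      ring
    have hexp : Complex.exp ((Complex.I * z - 1) * (r * T)) =
        (c : ℂ) * Complex.exp (Complex.I * z * ((r * T : ℝ) : ℂ)) := by
      have hcc : (c : ℂ) = Complex.exp ((-(r * T) : ℝ) : ℂ) := by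
        rw [hc, Complex.ofReal_exp]
      rw [hcc, ← Complex.exp_add]
      congr 1
      push_cast
      ring
    calc ∫ k : ℝ, Complex.exp (Complex.I * z * k) * (Vhat k : ℂ)
        = ∫ k : ℝ, φ (k - r * T) := by simp_rw [h1]
      _ = ∫ a : ℝ, φ a := integral_sub_right_eq_self φ (r * T)
      _ = ((c : ℂ) * Complex.exp (Complex.I * z * ((r * T : ℝ) : ℂ))) *
            ∫ a : ℝ, Complex.exp (Complex.I * z * (a : ℂ)) * ((g a : ℝ) : ℂ) := by
          simp_rw [h2]
          rw [integral_const_mul]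
      _ = ((c : ℂ) * Complex.exp (Complex.I * z * ((r * T : ℝ) : ℂ))) *
            ((1 / (Complex.I * z)) * ((∫ ω, Complex.exp (Complex.I * z * (Y ω : ℂ)) ∂μ) - 1)) := by
          rw [hgF z hz]
      _ = (1 / (Complex.I * z)) * Complex.exp ((Complex.I * z - 1) * (r * T)) *
            ((∫ ω, Complex.exp (Complex.I * z * (Y ω : ℂ)) ∂μ) - 1) := by
          rw [hexp]
          ring
end

section
/- Let Y be a real random variable on a probability space with 𝔼[e^Y] = 1, 𝔼[|Y|] < ∞ and 𝔼[|Y| e^Y] < ∞, let r ∈ ℝ, T > 0, and let Y∧ be a Gaussian random variable with mean −T/2 and variance T. Define V(k) = e^{−rT} 𝔼[(e^{rT+Y} − e^k)^+], the smooth offset term V∧(k) = e^{−rT} 𝔼[(e^{rT+Y∧} − e^k)^+], and the modified price V̂(k) = V(k) − V∧(k). Then V̂ is integrable on ℝ and for every real z ≠ 0, ∫_ℝ e^{izk} V̂(k) dk = (1/(iz(iz+1))) · e^{izrT} · (𝔼[e^{(1+iz)Y}] − 𝔼[e^{(1+iz)Y∧}]). -/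
open MeasureTheory Complex Real ProbabilityTheory
open scoped NNReal ENNReal

noncomputable def soaF (y x : ℝ) : ℝ :=
  if x < 0 then max (Real.exp x - Real.exp y) 0 else max (Real.exp y - Real.exp x) 0

lemma soaF_nonneg (y x : ℝ) : 0 ≤ soaF y x := by
  unfold soaF; split <;> exact le_max_right _ _

lemma soaF_measurable : Measurable (fun p : ℝ × ℝ => soaF p.2 p.1) := by
  unfold soaF
  apply Measurable.ite (measurableSet_lt measurable_fst measurable_const)
  · exact ((Real.measurable_exp.comp measurable_fst).sub
      (Real.measurable_exp.comp measurable_snd)).max measurable_const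
  · exact ((Real.measurable_exp.comp measurable_snd).sub
      (Real.measurable_exp.comp measurable_fst)).max measurable_const

lemma soaF_ae_nonneg_case {y : ℝ} (hy : 0 ≤ y) :
    (fun x => soaF y x) =ᵐ[volume] Set.indicator (Set.Ioc 0 y)
      (fun x => Real.exp y - Real.exp x) := by
  have h0 : (volume : Measure ℝ) ({0} : Set ℝ) = 0 := measure_singleton 0
  filter_upwards [compl_mem_ae_iff.mpr h0] with x hx
  simp only [Set.mem_compl_iff, Set.mem_singleton_iff] at hx
  unfold soaF
  rcases lt_trichotomy x 0 with h | h | h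
  · rw [if_pos h, Set.indicator_of_notMem (by simp [Set.mem_Ioc]; intro h'; linarith)]
    rw [max_eq_right]
    have := Real.exp_le_exp.mpr (le_trans h.le hy)
    linarith
  · exact absurd h hx
  · rw [if_neg (not_lt.mpr h.le)]
    by_cases hxy : x ≤ y
    · rw [Set.indicator_of_mem (Set.mem_Ioc.mpr ⟨h, hxy⟩)]
      rw [max_eq_left]
      have := Real.exp_le_exp.mpr hxy
      linarith
    · rw [Set.indicator_of_notMem (by simp [Set.mem_Ioc]; intro; linarith)]
      rw [max_eq_right]
      have := Real.exp_le_exp.mpr (not_le.mp hxy).le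
      linarith

lemma soaF_ae_neg_case {y : ℝ} (hy : y < 0) :
    (fun x => soaF y x) =ᵐ[volume] Set.indicator (Set.Ioc y 0)
      (fun x => Real.exp x - Real.exp y) := by
  have h0 : (volume : Measure ℝ) ({0} : Set ℝ) = 0 := measure_singleton 0
  filter_upwards [compl_mem_ae_iff.mpr h0] with x hx
  simp only [Set.mem_compl_iff, Set.mem_singleton_iff] at hx
  unfold soaF
  rcases lt_trichotomy x 0 with h | h | h
  · rw [if_pos h]
    by_cases hxy : y < x
    · rw [Set.indicator_of_mem (Set.mem_Ioc.mpr ⟨hxy, h.le⟩)]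
      rw [max_eq_left]
      have := Real.exp_le_exp.mpr hxy.le
      linarith
    · rw [Set.indicator_of_notMem (by simp [Set.mem_Ioc]; intro; linarith)]
      rw [max_eq_right]
      have := Real.exp_le_exp.mpr (not_lt.mp hxy)
      linarith
  · exact absurd h hx
  · rw [if_neg (not_lt.mpr h.le),
      Set.indicator_of_notMem (by simp [Set.mem_Ioc]; intro; linarith)]
    rw [max_eq_right]
    have := Real.exp_le_exp.mpr (le_trans hy.le h.le)
    linarith

lemma soaF_integrable (y : ℝ) : Integrable (soaF y) volume := by
  rcases le_or_gt 0 y with hy | hy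
  · refine (Integrable.congr ?_ (soaF_ae_nonneg_case hy).symm)
    exact ((continuous_const.sub Real.continuous_exp).integrableOn_Ioc).integrable_indicator
      measurableSet_Ioc
  · refine (Integrable.congr ?_ (soaF_ae_neg_case hy).symm)
    exact ((Real.continuous_exp.sub continuous_const).integrableOn_Ioc).integrable_indicator
      measurableSet_Ioc

lemma soaF_integral (y : ℝ) :
    ∫ x, soaF y x = y * Real.exp y - Real.exp y + 1 := by
  rcases le_or_gt 0 y with hy | hy
  · rw [integral_congr_ae (soaF_ae_nonneg_case hy), integral_indicator measurableSet_Ioc,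
      ← intervalIntegral.integral_of_le hy]
    rw [intervalIntegral.integral_sub intervalIntegrable_const
      (Real.continuous_exp.intervalIntegrable _ _)]
    simp [integral_exp]
    ring
  · rw [integral_congr_ae (soaF_ae_neg_case hy), integral_indicator measurableSet_Ioc,
      ← intervalIntegral.integral_of_le hy.le]
    rw [intervalIntegral.integral_sub (Real.continuous_exp.intervalIntegrable _ _)
      intervalIntegrable_const]
    simp [integral_exp]
    ring

lemma I_mul_ne_zero {z : ℝ} (hz : z ≠ 0) : Complex.I * (z : ℂ) ≠ 0 :=
  mul_ne_zero Complex.I_ne_zero (Complex.ofReal_ne_zero.mpr hz)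

lemma one_add_I_mul_ne_zero (z : ℝ) : (1 : ℂ) + Complex.I * z ≠ 0 := by
  intro h
  have := congrArg Complex.re h
  simp at this

lemma cexp_one_add (z y : ℝ) :
    Complex.exp ((1 + Complex.I * z) * y) =
      Complex.exp (y : ℂ) * Complex.exp (Complex.I * z * y) := by
  rw [← Complex.exp_add]; ring_nf

lemma soaF_integral_complex (z : ℝ) (hz : z ≠ 0) (y : ℝ) :
    ∫ x : ℝ, Complex.exp (Complex.I * z * x) * (soaF y x : ℂ) =
      (Complex.exp ((1 + Complex.I * z) * y) - Complex.exp (y : ℂ)) / (Complex.I * z) -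
      (Complex.exp ((1 + Complex.I * z) * y) - 1) / (1 + Complex.I * z) := by
  have hiz := I_mul_ne_zero hz
  have hiz1 := one_add_I_mul_ne_zero z
  have hcont1 : Continuous fun x : ℝ => Complex.exp (Complex.I * z * x) := by
    fun_prop
  have hcont2 : Continuous fun x : ℝ => Complex.exp ((1 + Complex.I * z) * x) := by
    fun_prop
  rcases le_or_gt 0 y with hy | hy
  · have hae : (fun x : ℝ => Complex.exp (Complex.I * z * x) * (soaF y x : ℂ)) =ᵐ[volume]
        Set.indicator (Set.Ioc 0 y)
          (fun x => (Real.exp y : ℂ) * Complex.exp (Complex.I * z * x) -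
            Complex.exp ((1 + Complex.I * z) * x)) := by
      filter_upwards [soaF_ae_nonneg_case hy] with x hx
      rw [hx]
      by_cases hm : x ∈ Set.Ioc 0 y
      · rw [Set.indicator_of_mem hm, Set.indicator_of_mem hm]
        push_cast
        rw [cexp_one_add z x]
        ring
      · simp [Set.indicator_of_notMem hm]
    rw [integral_congr_ae hae, integral_indicator measurableSet_Ioc,
      ← intervalIntegral.integral_of_le hy,
      intervalIntegral.integral_sub
        ((by fun_prop : Continuous fun x : ℝ =>
          (Real.exp y : ℂ) * Complex.exp (Complex.I * z * x)).intervalIntegrable _ _)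
        (hcont2.intervalIntegrable _ _)]
    rw [intervalIntegral.integral_const_mul]
    have e1 : ∫ x in (0:ℝ)..y, Complex.exp (Complex.I * z * x) =
        (Complex.exp (Complex.I * z * y) - 1) / (Complex.I * z) := by
      rw [integral_exp_mul_complex hiz]
      simp
    have e2 : ∫ x in (0:ℝ)..y, Complex.exp ((1 + Complex.I * z) * x) =
        (Complex.exp ((1 + Complex.I * z) * y) - 1) / (1 + Complex.I * z) := by
      rw [integral_exp_mul_complex hiz1]
      simp
    rw [e1, e2, cexp_one_add, Complex.ofReal_exp]
    ring
  · have hae : (fun x : ℝ => Complex.exp (Complex.I * z * x) * (soaF y x : ℂ)) =ᵐ[volume]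
        Set.indicator (Set.Ioc y 0)
          (fun x => Complex.exp ((1 + Complex.I * z) * x) -
            (Real.exp y : ℂ) * Complex.exp (Complex.I * z * x)) := by
      filter_upwards [soaF_ae_neg_case hy] with x hx
      rw [hx]
      by_cases hm : x ∈ Set.Ioc y 0
      · rw [Set.indicator_of_mem hm, Set.indicator_of_mem hm]
        push_cast
        rw [cexp_one_add z x]
        ring
      · simp [Set.indicator_of_notMem hm]
    rw [integral_congr_ae hae, integral_indicator measurableSet_Ioc,
      ← intervalIntegral.integral_of_le hy.le,
      intervalIntegral.integral_sub
        (hcont2.intervalIntegrable _ _)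
        ((by fun_prop : Continuous fun x : ℝ =>
          (Real.exp y : ℂ) * Complex.exp (Complex.I * z * x)).intervalIntegrable _ _)]
    rw [intervalIntegral.integral_const_mul]
    have e1 : ∫ x in y..(0:ℝ), Complex.exp (Complex.I * z * x) =
        (1 - Complex.exp (Complex.I * z * y)) / (Complex.I * z) := by
      rw [integral_exp_mul_complex hiz]
      simp
    have e2 : ∫ x in y..(0:ℝ), Complex.exp ((1 + Complex.I * z) * x) =
        (1 - Complex.exp ((1 + Complex.I * z) * y)) / (1 + Complex.I * z) := by
      rw [integral_exp_mul_complex hiz1]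
      simp
    rw [e1, e2, cexp_one_add, Complex.ofReal_exp]
    ring

lemma norm_cexp_I_mul (z x : ℝ) : ‖Complex.exp (Complex.I * z * x)‖ = 1 := by
  rw [Complex.norm_exp]
  simp

lemma norm_cexp_one_add (z y : ℝ) :
    ‖Complex.exp ((1 + Complex.I * z) * y)‖ = Real.exp y := by
  rw [Complex.norm_exp]
  congr 1
  simp

lemma soa_key (ν : Measure ℝ) [IsProbabilityMeasure ν]
    (hexp : Integrable Real.exp ν)
    (hmart : ∫ y, Real.exp y ∂ν = 1)
    (hyexp : Integrable (fun y => |y| * Real.exp y) ν) :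
    Integrable (fun x => (∫ y, max (Real.exp y - Real.exp x) 0 ∂ν) -
        max (1 - Real.exp x) 0) volume ∧
    ∀ z : ℝ, z ≠ 0 →
      (∫ x : ℝ, Complex.exp (Complex.I * z * x) *
          (((∫ y, max (Real.exp y - Real.exp x) 0 ∂ν) - max (1 - Real.exp x) 0 : ℝ) : ℂ)) =
        ((∫ y, Complex.exp ((1 + Complex.I * z) * y) ∂ν) - 1) *
          (1 / (Complex.I * z) - 1 / (1 + Complex.I * z)) := by
  -- step A : pointwise identity
  have hmaxint : ∀ x : ℝ, Integrable (fun y => max (Real.exp y - Real.exp x) 0) ν :=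
    fun x => (hexp.sub (integrable_const _)).pos_part
  have hDeq : ∀ x : ℝ, (∫ y, max (Real.exp y - Real.exp x) 0 ∂ν) - max (1 - Real.exp x) 0
      = ∫ y, soaF y x ∂ν := by
    intro x
    rcases lt_or_ge x 0 with hx | hx
    · have h1 : max (1 - Real.exp x) 0 = 1 - Real.exp x := by
        have : Real.exp x < 1 := by
          calc Real.exp x < Real.exp 0 := Real.exp_lt_exp.mpr hx
          _ = 1 := Real.exp_zero
        exact max_eq_left (by linarith)
      have h2 : ∀ y : ℝ, soaF y x =
          max (Real.exp y - Real.exp x) 0 - (Real.exp y - Real.exp x) := by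
        intro y
        unfold soaF
        rw [if_pos hx]
        rcases le_total (Real.exp y - Real.exp x) 0 with h | h
        · rw [max_eq_right h, max_eq_left (by linarith), zero_sub, neg_sub]
        · rw [max_eq_left h, max_eq_right (by linarith)]
          ring
      have hsub : Integrable (fun y : ℝ => Real.exp y - Real.exp x) ν :=
        hexp.sub (integrable_const _)
      have i1 : ∫ y, (max (Real.exp y - Real.exp x) 0 - (Real.exp y - Real.exp x)) ∂ν =
          (∫ y, max (Real.exp y - Real.exp x) 0 ∂ν) - ∫ y, (Real.exp y - Real.exp x) ∂ν :=
        integral_sub (hmaxint x) hsub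
      have i2 : ∫ y, (Real.exp y - Real.exp x) ∂ν = 1 - Real.exp x := by
        rw [integral_sub hexp (integrable_const _), hmart]
        simp
      rw [h1, integral_congr_ae (ae_of_all _ h2), i1, i2]
    · have h1 : max (1 - Real.exp x) 0 = 0 := by
        have : (1:ℝ) ≤ Real.exp x := by
          calc (1:ℝ) = Real.exp 0 := Real.exp_zero.symm
          _ ≤ Real.exp x := Real.exp_le_exp.mpr hx
        exact max_eq_right (by linarith)
      rw [h1, sub_zero]
      refine integral_congr_ae (ae_of_all _ fun y => ?_)
      simp [soaF, not_lt.mpr hx]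
  -- step B : product integrability
  have hyexp' : Integrable (fun y : ℝ => y * Real.exp y) ν := by
    refine hyexp.mono' ?_ (ae_of_all _ fun y => ?_)
    · exact (measurable_id.mul Real.measurable_exp).aestronglyMeasurable
    · rw [Real.norm_eq_abs, abs_mul, abs_of_pos (Real.exp_pos y)]
  have hg : Integrable (fun y : ℝ => ∫ x, ‖soaF y x‖) ν := by
    have heq : (fun y : ℝ => ∫ x, ‖soaF y x‖) =
        fun y => y * Real.exp y - Real.exp y + 1 := by
      funext y
      rw [← soaF_integral y]
      refine integral_congr_ae (ae_of_all _ fun x => ?_)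
      show ‖soaF y x‖ = soaF y x
      rw [Real.norm_eq_abs, _root_.abs_of_nonneg (soaF_nonneg y x)]
    rw [heq]
    exact (hyexp'.sub hexp).add (integrable_const 1)
  have hprod : Integrable (fun p : ℝ × ℝ => soaF p.2 p.1) ((volume : Measure ℝ).prod ν) := by
    refine (integrable_prod_iff' soaF_measurable.aestronglyMeasurable).mpr ?_
    exact ⟨ae_of_all _ fun y => soaF_integrable y, hg⟩
  have hDint : Integrable (fun x => ∫ y, soaF y x ∂ν) volume := hprod.integral_prod_left
  constructor
  · exact hDint.congr (ae_of_all _ fun x => (hDeq x).symm)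
  -- step C : Fourier identity
  intro z hz
  have hswapint : Integrable
      (Function.uncurry fun (x : ℝ) (y : ℝ) => Complex.exp (Complex.I * z * x) * (soaF y x : ℂ))
      ((volume : Measure ℝ).prod ν) := by
    refine hprod.mono' ?_ (ae_of_all _ fun p => ?_)
    · apply Measurable.aestronglyMeasurable
      apply Measurable.mul
      · show Measurable fun p : ℝ × ℝ => Complex.exp (Complex.I * z * p.1)
        fun_prop
      · exact Complex.measurable_ofReal.comp soaF_measurable
    · simp only [Function.uncurry]
      rw [norm_mul, norm_cexp_I_mul, one_mul, Complex.norm_real, Real.norm_eq_abs]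
      exact le_of_eq (_root_.abs_of_nonneg (soaF_nonneg p.2 p.1))
  calc ∫ x : ℝ, Complex.exp (Complex.I * z * x) *
          (((∫ y, max (Real.exp y - Real.exp x) 0 ∂ν) - max (1 - Real.exp x) 0 : ℝ) : ℂ)
      = ∫ x : ℝ, ∫ y, Complex.exp (Complex.I * z * x) * (soaF y x : ℂ) ∂ν := by
        refine integral_congr_ae (ae_of_all _ fun x => ?_)
        show Complex.exp (Complex.I * z * x) *
            (((∫ y, max (Real.exp y - Real.exp x) 0 ∂ν) - max (1 - Real.exp x) 0 : ℝ) : ℂ) =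
          ∫ y, Complex.exp (Complex.I * z * x) * (soaF y x : ℂ) ∂ν
        rw [hDeq x, MeasureTheory.integral_const_mul]
        congr 1
        exact (integral_ofReal (𝕜 := ℂ)).symm
    _ = ∫ y, (∫ x : ℝ, Complex.exp (Complex.I * z * x) * (soaF y x : ℂ)) ∂ν :=
        integral_integral_swap hswapint
    _ = ∫ y, ((Complex.exp ((1 + Complex.I * z) * y) - Complex.exp (y : ℂ)) / (Complex.I * z) -
          (Complex.exp ((1 + Complex.I * z) * y) - 1) / (1 + Complex.I * z)) ∂ν := by
        exact integral_congr_ae (ae_of_all _ fun y => soaF_integral_complex z hz y)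
    _ = ((∫ y, Complex.exp ((1 + Complex.I * z) * y) ∂ν) - 1) *
          (1 / (Complex.I * z) - 1 / (1 + Complex.I * z)) := by
        have hE : Integrable (fun y : ℝ => Complex.exp ((1 + Complex.I * z) * y)) ν := by
          refine hexp.mono' ?_ (ae_of_all _ fun y => ?_)
          · apply Measurable.aestronglyMeasurable
            show Measurable fun y : ℝ => Complex.exp ((1 + Complex.I * z) * y)
            fun_prop
          · rw [norm_cexp_one_add]
        have hF : Integrable (fun y : ℝ => Complex.exp (y : ℂ)) ν := by
          have : (fun y : ℝ => Complex.exp (y : ℂ)) = fun y : ℝ => ((Real.exp y : ℝ) : ℂ) := by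
            funext y; rw [Complex.ofReal_exp]
          rw [this]
          exact hexp.ofReal
        have hFval : ∫ y, Complex.exp (y : ℂ) ∂ν = 1 := by
          have h1 : (fun y : ℝ => Complex.exp (y : ℂ)) = fun y : ℝ => ((Real.exp y : ℝ) : ℂ) := by
            funext y; rw [Complex.ofReal_exp]
          calc ∫ y, Complex.exp (y : ℂ) ∂ν = ((∫ y, Real.exp y ∂ν : ℝ) : ℂ) := by
                rw [h1]; exact integral_ofReal (𝕜 := ℂ)
            _ = 1 := by rw [hmart]; norm_num
        have hint1 : Integrable (fun y : ℝ =>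
            (Complex.exp ((1 + Complex.I * z) * y) - Complex.exp (y : ℂ)) / (Complex.I * z)) ν :=
          (hE.sub hF).div_const _
        have hint2 : Integrable (fun y : ℝ =>
            (Complex.exp ((1 + Complex.I * z) * y) - 1) / (1 + Complex.I * z)) ν :=
          (hE.sub (integrable_const 1)).div_const _
        rw [integral_sub hint1 hint2, integral_div, integral_div, integral_sub hE hF,
          integral_sub hE (integrable_const 1), hFval]
        simp only [integral_const, measure_univ, probReal_univ, one_smul]
        ring

lemma gaussian_integrable_iff {m : ℝ} {v : ℝ≥0} (hv : v ≠ 0) (g : ℝ → ℝ) :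
    Integrable g (gaussianReal m v) ↔
      Integrable (fun x => gaussianPDFReal m v x * g x) volume := by
  rw [gaussianReal_of_var_ne_zero m hv]
  have hd : (gaussianPDF m v) = fun x => ((gaussianPDFReal m v x).toNNReal : ℝ≥0∞) := by
    funext x; rfl
  rw [hd, integrable_withDensity_iff_integrable_smul₀
    ((measurable_gaussianPDFReal m v).real_toNNReal.aemeasurable)]
  apply integrable_congr
  refine ae_of_all _ fun x => ?_
  simp only [NNReal.smul_def, smul_eq_mul]
  rw [Real.coe_toNNReal _ (gaussianPDFReal_nonneg m v x)]

lemma gaussian_integral_eq {m : ℝ} {v : ℝ≥0} (hv : v ≠ 0) (g : ℝ → ℝ) :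
    ∫ y, g y ∂(gaussianReal m v) = ∫ x, gaussianPDFReal m v x * g x := by
  rw [gaussianReal_of_var_ne_zero m hv]
  have hd : (gaussianPDF m v) = fun x => ((gaussianPDFReal m v x).toNNReal : ℝ≥0∞) := by
    funext x; rfl
  rw [hd, integral_withDensity_eq_integral_smul₀
    ((measurable_gaussianPDFReal m v).real_toNNReal.aemeasurable) g]
  refine integral_congr_ae (ae_of_all _ fun x => ?_)
  simp only [NNReal.smul_def, smul_eq_mul]
  rw [Real.coe_toNNReal _ (gaussianPDFReal_nonneg m v x)]

lemma gaussian_tilt {m : ℝ} {v : ℝ≥0} (hv : v ≠ 0) (x : ℝ) :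
    gaussianPDFReal m v x * Real.exp x =
      Real.exp (m + (v : ℝ) / 2) * gaussianPDFReal (m + (v : ℝ)) v x := by
  have hv' : (0 : ℝ) < v := NNReal.coe_pos.mpr (pos_iff_ne_zero.mpr hv)
  simp only [gaussianPDFReal]
  have h : -(x - m)^2 / (2 * (v : ℝ)) + x =
      (m + (v : ℝ) / 2) + (-(x - (m + (v : ℝ)))^2 / (2 * (v : ℝ))) := by
    field_simp
    ring
  rw [mul_assoc, ← Real.exp_add, h, Real.exp_add]
  ring

lemma gaussian_exp_integrable {m : ℝ} {v : ℝ≥0} (hv : v ≠ 0) :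
    Integrable (fun y => Real.exp y) (gaussianReal m v) := by
  rw [gaussian_integrable_iff hv]
  have h : (fun x => gaussianPDFReal m v x * Real.exp x) =
      fun x => Real.exp (m + (v : ℝ) / 2) * gaussianPDFReal (m + (v : ℝ)) v x :=
    funext (gaussian_tilt hv)
  rw [h]
  exact (integrable_gaussianPDFReal _ _).const_mul _

lemma gaussian_exp_integral {m : ℝ} {v : ℝ≥0} (hv : v ≠ 0) :
    ∫ y, Real.exp y ∂(gaussianReal m v) = Real.exp (m + (v : ℝ) / 2) := by
  rw [gaussian_integral_eq hv]
  have h : (fun x => gaussianPDFReal m v x * Real.exp x) =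
      fun x => Real.exp (m + (v : ℝ) / 2) * gaussianPDFReal (m + (v : ℝ)) v x :=
    funext (gaussian_tilt hv)
  rw [h, MeasureTheory.integral_const_mul, integral_gaussianPDFReal_eq_one _ hv, mul_one]

lemma gaussian_abs_pdf_integrable {v : ℝ≥0} (hv : v ≠ 0) (M : ℝ) :
    Integrable (fun x => gaussianPDFReal M v x * |x|) volume := by
  have hv' : (0 : ℝ) < v := NNReal.coe_pos.mpr (pos_iff_ne_zero.mpr hv)
  have hb : (0 : ℝ) < 1 / (2 * (v : ℝ)) := by positivity
  have hexpo : ∀ u : ℝ, -(1 / (2 * (v : ℝ))) * u ^ 2 = -u ^ 2 / (2 * (v : ℝ)) := by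
    intro u; ring
  have t1 : Integrable (fun x : ℝ => |x - M| * Real.exp (-(x - M) ^ 2 / (2 * (v : ℝ))))
      volume := by
    have h := (integrable_mul_exp_neg_mul_sq hb).norm
    have h2 := h.comp_sub_right M
    refine h2.congr (ae_of_all _ fun x => ?_)
    show ‖(x - M) * Real.exp (-(1 / (2 * (v : ℝ))) * (x - M) ^ 2)‖ =
      |x - M| * Real.exp (-(x - M) ^ 2 / (2 * (v : ℝ)))
    rw [norm_mul, Real.norm_eq_abs, Real.norm_eq_abs,
      _root_.abs_of_pos (Real.exp_pos _), hexpo]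
  have t2 : Integrable (fun x : ℝ => Real.exp (-(x - M) ^ 2 / (2 * (v : ℝ)))) volume := by
    have h2 := (integrable_exp_neg_mul_sq hb).comp_sub_right M
    refine h2.congr (ae_of_all _ fun x => ?_)
    show Real.exp (-(1 / (2 * (v : ℝ))) * (x - M) ^ 2) =
      Real.exp (-(x - M) ^ 2 / (2 * (v : ℝ)))
    rw [hexpo]
  refine Integrable.mono'
    (((t1.add (t2.const_mul |M|)).const_mul ((Real.sqrt (2 * π * (v : ℝ)))⁻¹)))
    ?_ (ae_of_all _ fun x => ?_)
  · exact ((measurable_gaussianPDFReal M v).mul measurable_abs).aestronglyMeasurable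
  · rw [Real.norm_eq_abs,
      _root_.abs_of_nonneg (mul_nonneg (gaussianPDFReal_nonneg M v x) (abs_nonneg x))]
    simp only [gaussianPDFReal]
    have hx : |x| ≤ |x - M| + |M| := by
      calc |x| = |(x - M) + M| := by ring_nf
      _ ≤ |x - M| + |M| := abs_add_le _ _
    have hsq : (0:ℝ) ≤ (Real.sqrt (2 * π * (v : ℝ)))⁻¹ := by positivity
    have hex : (0:ℝ) < Real.exp (-(x - M) ^ 2 / (2 * (v : ℝ))) := Real.exp_pos _
    calc (Real.sqrt (2 * π * (v : ℝ)))⁻¹ * Real.exp (-(x - M) ^ 2 / (2 * (v : ℝ))) * |x|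
        ≤ (Real.sqrt (2 * π * (v : ℝ)))⁻¹ * Real.exp (-(x - M) ^ 2 / (2 * (v : ℝ))) *
          (|x - M| + |M|) := by
          apply mul_le_mul_of_nonneg_left hx (by positivity)
      _ = (Real.sqrt (2 * π * (v : ℝ)))⁻¹ *
          (|x - M| * Real.exp (-(x - M) ^ 2 / (2 * (v : ℝ))) +
            |M| * Real.exp (-(x - M) ^ 2 / (2 * (v : ℝ)))) := by ring

lemma gaussian_absexp_integrable {m : ℝ} {v : ℝ≥0} (hv : v ≠ 0) :
    Integrable (fun y => |y| * Real.exp y) (gaussianReal m v) := by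
  rw [gaussian_integrable_iff hv]
  have h : (fun x => gaussianPDFReal m v x * (|x| * Real.exp x)) =
      fun x => Real.exp (m + (v : ℝ) / 2) * (gaussianPDFReal (m + (v : ℝ)) v x * |x|) := by
    funext x
    calc gaussianPDFReal m v x * (|x| * Real.exp x)
        = (gaussianPDFReal m v x * Real.exp x) * |x| := by ring
      _ = (Real.exp (m + (v : ℝ) / 2) * gaussianPDFReal (m + (v : ℝ)) v x) * |x| := by
          rw [gaussian_tilt hv]
      _ = Real.exp (m + (v : ℝ) / 2) * (gaussianPDFReal (m + (v : ℝ)) v x * |x|) := by ring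
  rw [h]
  exact (gaussian_abs_pdf_integrable hv _).const_mul _

/-- SOA (smooth offset) Fourier transform identity for European options
(European case of the paper's Theorem 3.1). -/
theorem soa_european
    {Ω : Type*} [MeasurableSpace Ω] (μ : Measure Ω) [IsProbabilityMeasure μ]
    (Y : Ω → ℝ) (hYm : Measurable Y)
    (hYint : Integrable Y μ)
    (hexpYint : Integrable (fun ω => Real.exp (Y ω)) μ)
    (hmart : ∫ ω, Real.exp (Y ω) ∂μ = 1)
    (hYexpYint : Integrable (fun ω => |Y ω| * Real.exp (Y ω)) μ)
    (r T : ℝ) (hT : 0 < T)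
    (V Vwedge Vhat : ℝ → ℝ)
    (hV : ∀ k, V k = Real.exp (-(r * T)) *
      ∫ ω, max (Real.exp (r * T + Y ω) - Real.exp k) 0 ∂μ)
    (hVwedge : ∀ k, Vwedge k = Real.exp (-(r * T)) *
      ∫ y, max (Real.exp (r * T + y) - Real.exp k) 0
        ∂(gaussianReal (-(T / 2)) (Real.toNNReal T)))
    (hVhat : ∀ k, Vhat k = V k - Vwedge k) :
    Integrable Vhat volume ∧
      ∀ z : ℝ, z ≠ 0 →
        ∫ k : ℝ, Complex.exp (Complex.I * z * k) * (Vhat k : ℂ) =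
          (1 / (Complex.I * z * (Complex.I * z + 1))) *
            Complex.exp (Complex.I * z * (r * T)) *
            ((∫ ω, Complex.exp ((1 + Complex.I * z) * (Y ω : ℂ)) ∂μ) -
              ∫ y, Complex.exp ((1 + Complex.I * z) * (y : ℂ))
                ∂(gaussianReal (-(T / 2)) (Real.toNNReal T))) := by
  classical
  set γ : Measure ℝ := gaussianReal (-(T / 2)) (Real.toNNReal T) with hγ
  have hv : Real.toNNReal T ≠ 0 := (Real.toNNReal_pos.mpr hT).ne'
  have hvT : ((Real.toNNReal T : ℝ≥0) : ℝ) = T := Real.coe_toNNReal T hT.le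
  set ν₁ : Measure ℝ := μ.map Y with hν₁
  have : IsProbabilityMeasure ν₁ := Measure.isProbabilityMeasure_map hYm.aemeasurable
  -- hypotheses for ν₁
  have hexp1 : Integrable Real.exp ν₁ := by
    rw [hν₁, integrable_map_measure Real.measurable_exp.aestronglyMeasurable hYm.aemeasurable]
    exact hexpYint
  have hmart1 : ∫ y, Real.exp y ∂ν₁ = 1 := by
    rw [hν₁, integral_map hYm.aemeasurable Real.measurable_exp.aestronglyMeasurable]
    exact hmart
  have hyexp1 : Integrable (fun y => |y| * Real.exp y) ν₁ := by
    rw [hν₁, integrable_map_measure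
      (by fun_prop : Measurable fun y : ℝ => |y| * Real.exp y).aestronglyMeasurable hYm.aemeasurable]
    exact hYexpYint
  -- hypotheses for γ
  have hexp2 : Integrable Real.exp γ := gaussian_exp_integrable hv
  have hmart2 : ∫ y, Real.exp y ∂γ = 1 := by
    rw [hγ, gaussian_exp_integral hv, hvT]
    norm_num
  have hyexp2 : Integrable (fun y => |y| * Real.exp y) γ := gaussian_absexp_integrable hv
  obtain ⟨hint1, hfour1⟩ := soa_key ν₁ hexp1 hmart1 hyexp1
  obtain ⟨hint2, hfour2⟩ := soa_key γ hexp2 hmart2 hyexp2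
  -- identification of Vhat
  set D₁ : ℝ → ℝ := fun x => (∫ y, max (Real.exp y - Real.exp x) 0 ∂ν₁) -
    max (1 - Real.exp x) 0 with hD₁
  set D₂ : ℝ → ℝ := fun x => (∫ y, max (Real.exp y - Real.exp x) 0 ∂γ) -
    max (1 - Real.exp x) 0 with hD₂
  have hpoint : ∀ (y k : ℝ), Real.exp (-(r * T)) * max (Real.exp (r * T + y) - Real.exp k) 0
      = max (Real.exp y - Real.exp (k - r * T)) 0 := by
    intro y k
    rw [mul_comm, max_mul_of_nonneg _ _ (Real.exp_nonneg _), zero_mul, sub_mul,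
      ← Real.exp_add, ← Real.exp_add]
    congr 2 <;> ring
  have hVW : ∀ k, V k = ∫ y, max (Real.exp y - Real.exp (k - r * T)) 0 ∂ν₁ := by
    intro k
    rw [hV k,
      show (∫ ω, max (Real.exp (r * T + Y ω) - Real.exp k) 0 ∂μ) =
          ∫ y, max (Real.exp (r * T + y) - Real.exp k) 0 ∂ν₁ from
        (integral_map hYm.aemeasurable
          ((by fun_prop : Measurable fun y : ℝ =>
            max (Real.exp (r * T + y) - Real.exp k) 0).aestronglyMeasurable)).symm,
      ← MeasureTheory.integral_const_mul]
    exact integral_congr_ae (ae_of_all _ fun y => hpoint y k)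
  have hVW2 : ∀ k, Vwedge k = ∫ y, max (Real.exp y - Real.exp (k - r * T)) 0 ∂γ := by
    intro k
    rw [hVwedge k, ← MeasureTheory.integral_const_mul]
    refine integral_congr_ae (ae_of_all _ fun y => ?_)
    exact hpoint y k
  have hVhat' : ∀ k, Vhat k = D₁ (k - r * T) - D₂ (k - r * T) := by
    intro k
    rw [hVhat k, hVW k, hVW2 k, hD₁, hD₂]
    ring
  constructor
  · refine (((hint1.comp_sub_right (r * T)).sub (hint2.comp_sub_right (r * T))).congr
      (ae_of_all _ fun k => ?_))
    show D₁ (k - r * T) - D₂ (k - r * T) = Vhat k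
    rw [hVhat' k]
  intro z hz
  have hiz := I_mul_ne_zero hz
  have hiz1 := one_add_I_mul_ne_zero z
  have hcexpsplit : ∀ k : ℝ, Complex.exp (Complex.I * z * k) =
      Complex.exp (Complex.I * z * (r * T)) * Complex.exp (Complex.I * z * (k - r * T)) := by
    intro k
    rw [← Complex.exp_add]
    congr 1
    push_cast
    ring
  have hmeas1 : AEStronglyMeasurable (fun x : ℝ => Complex.exp (Complex.I * z * x) *
      (D₁ x : ℂ)) volume := by
    exact ((Complex.measurable_exp.comp (by fun_prop) :
        Measurable fun x : ℝ => Complex.exp (Complex.I * z * x)).aestronglyMeasurable).mul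
      (Complex.continuous_ofReal.comp_aestronglyMeasurable hint1.aestronglyMeasurable)
  have hmeas2 : AEStronglyMeasurable (fun x : ℝ => Complex.exp (Complex.I * z * x) *
      (D₂ x : ℂ)) volume := by
    exact ((Complex.measurable_exp.comp (by fun_prop) :
        Measurable fun x : ℝ => Complex.exp (Complex.I * z * x)).aestronglyMeasurable).mul
      (Complex.continuous_ofReal.comp_aestronglyMeasurable hint2.aestronglyMeasurable)
  have hci : ∀ (D : ℝ → ℝ), Integrable D volume →
      AEStronglyMeasurable (fun x : ℝ => Complex.exp (Complex.I * z * x) * (D x : ℂ)) volume →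
      Integrable (fun x : ℝ => Complex.exp (Complex.I * z * x) * (D x : ℂ)) volume := by
    intro D hD hm
    refine hD.norm.mono' hm (ae_of_all _ fun x => ?_)
    rw [norm_mul, norm_cexp_I_mul, one_mul, Complex.norm_real,
      Real.norm_eq_abs]
  have hci1 := hci D₁ hint1 hmeas1
  have hci2 := hci D₂ hint2 hmeas2
  calc ∫ k : ℝ, Complex.exp (Complex.I * z * k) * (Vhat k : ℂ)
      = ∫ k : ℝ, Complex.exp (Complex.I * z * (r * T)) *
          ((fun x : ℝ => Complex.exp (Complex.I * z * x) * (D₁ x : ℂ) -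
            Complex.exp (Complex.I * z * x) * (D₂ x : ℂ)) (k - r * T)) := by
        refine integral_congr_ae (ae_of_all _ fun k => ?_)
        show Complex.exp (Complex.I * z * k) * (Vhat k : ℂ) = _
        rw [hVhat' k, hcexpsplit k]
        push_cast
        ring
    _ = Complex.exp (Complex.I * z * (r * T)) *
          ∫ x : ℝ, (Complex.exp (Complex.I * z * x) * (D₁ x : ℂ) -
            Complex.exp (Complex.I * z * x) * (D₂ x : ℂ)) := by
        rw [MeasureTheory.integral_const_mul,
          integral_sub_right_eq_self (μ := volume)
            (fun x : ℝ => Complex.exp (Complex.I * z * x) * (D₁ x : ℂ) -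
              Complex.exp (Complex.I * z * x) * (D₂ x : ℂ)) (r * T)]
    _ = Complex.exp (Complex.I * z * (r * T)) *
          ((∫ x : ℝ, Complex.exp (Complex.I * z * x) * (D₁ x : ℂ)) -
           (∫ x : ℝ, Complex.exp (Complex.I * z * x) * (D₂ x : ℂ))) := by
        rw [integral_sub hci1 hci2]
    _ = Complex.exp (Complex.I * z * (r * T)) *
          ((((∫ y, Complex.exp ((1 + Complex.I * z) * y) ∂ν₁) - 1) *
            (1 / (Complex.I * z) - 1 / (1 + Complex.I * z))) -
           (((∫ y, Complex.exp ((1 + Complex.I * z) * y) ∂γ) - 1) *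
            (1 / (Complex.I * z) - 1 / (1 + Complex.I * z)))) := by
        rw [hfour1 z hz, hfour2 z hz]
    _ = (1 / (Complex.I * z * (Complex.I * z + 1))) *
          Complex.exp (Complex.I * z * (r * T)) *
          ((∫ ω, Complex.exp ((1 + Complex.I * z) * (Y ω : ℂ)) ∂μ) -
            ∫ y, Complex.exp ((1 + Complex.I * z) * (y : ℂ)) ∂γ) := by
        have hmap : ∫ y, Complex.exp ((1 + Complex.I * z) * y) ∂ν₁ =
            ∫ ω, Complex.exp ((1 + Complex.I * z) * (Y ω : ℂ)) ∂μ := by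
          rw [hν₁, integral_map hYm.aemeasurable]
          exact (Complex.measurable_exp.comp (by fun_prop) :
            Measurable fun y : ℝ => Complex.exp ((1 + Complex.I * z) * y)).aestronglyMeasurable
        have hc : (1 : ℂ) / (Complex.I * z) - 1 / (1 + Complex.I * z) =
            1 / (Complex.I * z * (Complex.I * z + 1)) := by
          rw [div_sub_div _ _ hiz hiz1]
          congr 1
          · ring
          · ring
        rw [hmap, hc]
        ring
end

section
/- Let Y be a real random variable on a probability space with 𝔼[|Y|] < ∞, let r ∈ ℝ, T > 0, and let Y∧ be a Gaussian random variable with mean −T/2 and variance T. Define V(k) = e^{−rT} ℙ(rT + Y ≥ k), the smooth offset term V∧(k) = e^{−rT} ℙ(rT + Y∧ ≥ k), and the modified price V̂(k) = V(k) − V∧(k). Then V̂ is integrable on ℝ and for every real z ≠ 0, ∫_ℝ e^{izk} V̂(k) dk = (1/(iz)) · e^{(iz−1)rT} · (𝔼[e^{izY}] − exp(−(T/2)(iz + z²))). -/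
open MeasureTheory Complex Real ProbabilityTheory
open scoped NNReal ENNReal

section Aux


lemma gauss_integral_repr {E : Type*} [NormedAddCommGroup E] [NormedSpace ℝ E]
    (m : ℝ) {v : ℝ≥0} (hv : v ≠ 0) (g : ℝ → E) :
    ∫ x, g x ∂(gaussianReal m v) = ∫ x, gaussianPDFReal m v x • g x := by
  rw [gaussianReal_of_var_ne_zero m hv]
  have h : (gaussianPDF m v) = fun x => ((Real.toNNReal (gaussianPDFReal m v x) : ℝ≥0) : ℝ≥0∞) :=
    rfl
  rw [h, integral_withDensity_eq_integral_smul
    (f := fun x => (gaussianPDFReal m v x).toNNReal)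
    (measurable_real_toNNReal.comp (measurable_gaussianPDFReal m v))]
  congr 1
  ext x
  rw [NNReal.smul_def, Real.coe_toNNReal _ (gaussianPDFReal_nonneg m v x)]

lemma gauss_integrable_repr (m : ℝ) {v : ℝ≥0} (hv : v ≠ 0) (g : ℝ → ℝ)
    (h : Integrable (fun x => gaussianPDFReal m v x * g x) volume) :
    Integrable g (gaussianReal m v) := by
  rw [gaussianReal_of_var_ne_zero m hv]
  rw [integrable_withDensity_iff (measurable_gaussianPDF m v)
    (ae_of_all _ fun x => ENNReal.ofReal_lt_top)]
  simpa [gaussianPDF, ENNReal.toReal_ofReal (gaussianPDFReal_nonneg m v _), mul_comm] using h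

lemma gauss_integrable_id (m : ℝ) (v : ℝ≥0) :
    Integrable (fun x : ℝ => x) (gaussianReal m v) := by
  by_cases hv : v = 0
  · subst hv
    rw [gaussianReal_zero_var]
    refine ⟨aestronglyMeasurable_id, ?_⟩
    simp [HasFiniteIntegral, lintegral_dirac]
  · have hvpos : (0:ℝ) < v := lt_of_le_of_ne v.coe_nonneg (by exact_mod_cast (Ne.symm hv))
    have hb : (0:ℝ) < 1 / (2 * v) := by positivity
    have h1 : Integrable (fun y : ℝ => y * rexp (-(1/(2*(v:ℝ))) * y ^ 2)) volume := by
      simpa using integrable_rpow_mul_exp_neg_mul_sq hb (s := 1) (by norm_num)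
    have h2 : Integrable (fun y : ℝ => rexp (-(1/(2*(v:ℝ))) * y ^ 2)) volume :=
      integrable_exp_neg_mul_sq hb
    have harg : ∀ y : ℝ, -(1/(2*(v:ℝ))) * y ^ 2 = -y ^ 2 / (2*(v:ℝ)) := fun y => by ring
    have hf : Integrable (fun y : ℝ => (y + m) * rexp (-y ^ 2 / (2*(v:ℝ)))) volume := by
      refine (h1.add (h2.const_mul m)).congr (ae_of_all _ fun y => ?_)
      simp only [Pi.add_apply]
      rw [harg y]
      ring
    have hg : Integrable (fun x : ℝ => x * rexp (-(x - m) ^ 2 / (2*(v:ℝ)))) volume := by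
      have := hf.comp_sub_right m
      simpa using this
    apply gauss_integrable_repr m hv
    refine (hg.const_mul (√(2 * π * v))⁻¹).congr (ae_of_all _ fun x => ?_)
    simp only [gaussianPDFReal]
    ring

lemma gauss_charfun (m : ℝ) {v : ℝ≥0} (hv : v ≠ 0) (z : ℝ) :
    ∫ x, Complex.exp (Complex.I * z * x) ∂(gaussianReal m v)
      = Complex.exp (Complex.I * z * m - (v:ℝ) * z ^ 2 / 2) := by
  have hvpos : (0:ℝ) < v := lt_of_le_of_ne v.coe_nonneg (by exact_mod_cast (Ne.symm hv))
  have hvC : ((v:ℝ) : ℂ) ≠ 0 := by exact_mod_cast hvpos.ne'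
  set b : ℂ := ((-(1 / (2 * (v:ℝ))) : ℝ) : ℂ) with hbdef
  set c : ℂ := ((m / (v:ℝ) : ℝ) : ℂ) + Complex.I * z with hcdef
  set d : ℂ := ((-(m ^ 2 / (2 * (v:ℝ))) : ℝ) : ℂ) with hddef
  have hbre : b.re < 0 := by
    simp only [hbdef, Complex.ofReal_re]
    rw [neg_lt, neg_zero]
    positivity
  rw [gauss_integral_repr m hv]
  have hpt : ∀ x : ℝ, gaussianPDFReal m v x • Complex.exp (Complex.I * z * x)
      = ((√(2 * π * v))⁻¹ : ℝ) * Complex.exp (b * x ^ 2 + c * x + d) := by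
    intro x
    rw [gaussianPDFReal]
    rw [Complex.real_smul, hbdef, hcdef, hddef]
    push_cast
    rw [mul_assoc, ← Complex.exp_add]
    congr 2
    field_simp [hvC]
    ring
  simp_rw [hpt]
  rw [integral_const_mul, integral_cexp_quadratic hbre]
  have h2πv : (0:ℝ) < 2 * π * v := by positivity
  have hpib : (↑π / -b) = ((2 * π * (v:ℝ) : ℝ) : ℂ) := by
    rw [hbdef]
    push_cast
    field_simp [hvC]
  have hsqrt : (↑π / -b) ^ (1 / 2 : ℂ) = ((√(2 * π * v) : ℝ) : ℂ) := by
    rw [hpib, Real.sqrt_eq_rpow, show (1/2 : ℂ) = ((1/2 : ℝ) : ℂ) by norm_num,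
      ← Complex.ofReal_cpow h2πv.le]
  rw [hsqrt]
  have hexp : d - c ^ 2 / (4 * b) = Complex.I * z * m - (v:ℝ) * z ^ 2 / 2 := by
    rw [hbdef, hcdef, hddef]
    have : Complex.I * z * m = Complex.I * z * m := rfl
    push_cast
    field_simp [hvC]
    ring_nf
    rw [Complex.I_sq]
    ring
  rw [hexp, ← mul_assoc, ← Complex.ofReal_mul]
  rw [inv_mul_cancel₀ (by positivity : √(2 * π * (v:ℝ)) ≠ 0)]
  simp



lemma ind_diff (x y k : ℝ) :
    (Set.Ioc y x).indicator (fun _ => (1:ℝ)) k - (Set.Ioc x y).indicator (fun _ => (1:ℝ)) k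
      = (Set.Ici k).indicator (fun _ => (1:ℝ)) x - (Set.Ici k).indicator (fun _ => (1:ℝ)) y := by
  simp only [Set.indicator_apply, Set.mem_Ioc, Set.mem_Ici]
  split_ifs <;> simp_all <;> linarith

variable (P Q : Measure ℝ) [IsProbabilityMeasure P] [IsProbabilityMeasure Q]

lemma map_fst_PQ : Measure.map Prod.fst (P.prod Q) = P := by
  rw [Measure.map_fst_prod, measure_univ, one_smul]

lemma map_snd_PQ : Measure.map Prod.snd (P.prod Q) = Q := by
  rw [Measure.map_snd_prod, measure_univ, one_smul]

lemma integrable_comp_fst {E : Type*} [NormedAddCommGroup E] {f : ℝ → E}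
    (hf : Integrable f P) : Integrable (fun p : ℝ × ℝ => f p.1) (P.prod Q) := by
  rw [← map_fst_PQ P Q] at hf
  exact (integrable_map_measure hf.aestronglyMeasurable measurable_fst.aemeasurable).1 hf

lemma integrable_comp_snd {E : Type*} [NormedAddCommGroup E] {f : ℝ → E}
    (hf : Integrable f Q) : Integrable (fun p : ℝ × ℝ => f p.2) (P.prod Q) := by
  rw [← map_snd_PQ P Q] at hf
  exact (integrable_map_measure hf.aestronglyMeasurable measurable_snd.aemeasurable).1 hf

lemma integral_comp_fst {E : Type*} [NormedAddCommGroup E] [NormedSpace ℝ E] {f : ℝ → E}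
    (hf : AEStronglyMeasurable f P) :
    ∫ p, f p.1 ∂(P.prod Q) = ∫ x, f x ∂P := by
  rw [← integral_map measurable_fst.aemeasurable (by rwa [map_fst_PQ]), map_fst_PQ]

lemma integral_comp_snd {E : Type*} [NormedAddCommGroup E] [NormedSpace ℝ E] {f : ℝ → E}
    (hf : AEStronglyMeasurable f Q) :
    ∫ p, f p.2 ∂(P.prod Q) = ∫ x, f x ∂Q := by
  rw [← integral_map measurable_snd.aemeasurable (by rwa [map_snd_PQ]), map_snd_PQ]

lemma key (hP : Integrable (fun x : ℝ => x) P) (hQ : Integrable (fun x : ℝ => x) Q) :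
    Integrable (fun k => (P (Set.Ici k)).toReal - (Q (Set.Ici k)).toReal) volume ∧
    ∀ z : ℝ, z ≠ 0 →
      ∫ k : ℝ, Complex.exp (Complex.I * z * k) *
          (((P (Set.Ici k)).toReal - (Q (Set.Ici k)).toReal : ℝ) : ℂ)
        = (1 / (Complex.I * z)) *
          ((∫ x, Complex.exp (Complex.I * z * x) ∂P) - ∫ x, Complex.exp (Complex.I * z * x) ∂Q) := by
  set ρ : Measure (ℝ × ℝ) := P.prod Q with hρ
  set f : (ℝ × ℝ) × ℝ → ℝ := fun q =>
    (Set.Ioc q.1.2 q.1.1).indicator (fun _ => (1:ℝ)) q.2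
      - (Set.Ioc q.1.1 q.1.2).indicator (fun _ => (1:ℝ)) q.2 with hfdef
  -- measurability of f
  have hS1 : MeasurableSet {q : (ℝ × ℝ) × ℝ | q.2 ∈ Set.Ioc q.1.2 q.1.1} := by
    apply MeasurableSet.inter
    · exact measurableSet_lt (measurable_fst.snd) measurable_snd
    · exact measurableSet_le measurable_snd (measurable_fst.fst)
  have hS2 : MeasurableSet {q : (ℝ × ℝ) × ℝ | q.2 ∈ Set.Ioc q.1.1 q.1.2} := by
    apply MeasurableSet.inter
    · exact measurableSet_lt (measurable_fst.fst) measurable_snd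
    · exact measurableSet_le measurable_snd (measurable_fst.snd)
  have hmf : Measurable f := by
    have h1 : Measurable ({q : (ℝ × ℝ) × ℝ | q.2 ∈ Set.Ioc q.1.2 q.1.1}.indicator
        (fun _ => (1:ℝ))) := measurable_const.indicator hS1
    have h2 : Measurable ({q : (ℝ × ℝ) × ℝ | q.2 ∈ Set.Ioc q.1.1 q.1.2}.indicator
        (fun _ => (1:ℝ))) := measurable_const.indicator hS2
    have : f = fun q => {q : (ℝ × ℝ) × ℝ | q.2 ∈ Set.Ioc q.1.2 q.1.1}.indicator
        (fun _ => (1:ℝ)) q - {q : (ℝ × ℝ) × ℝ | q.2 ∈ Set.Ioc q.1.1 q.1.2}.indicator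
        (fun _ => (1:ℝ)) q := by
      funext q
      simp only [hfdef, Set.indicator_apply, Set.mem_setOf_eq]
    rw [this]
    exact h1.sub h2
  -- integrability of each indicator slice
  have hislice : ∀ a b : ℝ, Integrable ((Set.Ioc a b).indicator (fun _ => (1:ℝ))) volume := by
    intro a b
    rw [integrable_indicator_iff measurableSet_Ioc]
    exact integrableOn_const measure_Ioc_lt_top.ne
  have hslice : ∀ p : ℝ × ℝ, Integrable (fun k => f (p, k)) volume := by
    intro p
    exact (hislice p.2 p.1).sub (hislice p.1 p.2)
  -- bound on the slice integrals
  have hbound : ∀ p : ℝ × ℝ, (∫ k, ‖f (p, k)‖) ≤ |p.1| + |p.2| := by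
    intro p
    have h1 : (∫ k, ‖f (p, k)‖) ≤ ∫ k, ((Set.Ioc p.2 p.1).indicator (fun _ => (1:ℝ)) k
        + (Set.Ioc p.1 p.2).indicator (fun _ => (1:ℝ)) k) := by
      refine integral_mono (hslice p).norm ((hislice p.2 p.1).add (hislice p.1 p.2)) ?_
      intro k
      refine (norm_sub_le _ _).trans ?_
      rw [Real.norm_of_nonneg (Set.indicator_nonneg (fun _ _ => zero_le_one) k),
        Real.norm_of_nonneg (Set.indicator_nonneg (fun _ _ => zero_le_one) k)]
    have h2 : (∫ k, ((Set.Ioc p.2 p.1).indicator (fun _ => (1:ℝ)) k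
        + (Set.Ioc p.1 p.2).indicator (fun _ => (1:ℝ)) k))
        = (volume (Set.Ioc p.2 p.1)).toReal + (volume (Set.Ioc p.1 p.2)).toReal := by
      rw [integral_add (hislice p.2 p.1) (hislice p.1 p.2),
        integral_indicator measurableSet_Ioc, integral_indicator measurableSet_Ioc,
        setIntegral_const, setIntegral_const]
      simp
      rw [ENNReal.toReal_ofReal', ENNReal.toReal_ofReal']
    refine h1.trans (h2.le.trans ?_)
    rw [Real.volume_Ioc, Real.volume_Ioc]
    have habs : (ENNReal.ofReal (p.1 - p.2)).toReal
        + (ENNReal.ofReal (p.2 - p.1)).toReal = |p.1 - p.2| := by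
      rcases le_or_gt 0 (p.1 - p.2) with h | h
      · rw [ENNReal.toReal_ofReal h, ENNReal.ofReal_of_nonpos (by linarith), _root_.abs_of_nonneg h]
        simp
      · rw [ENNReal.ofReal_of_nonpos h.le, ENNReal.toReal_ofReal (by linarith),
          _root_.abs_of_neg h]
        simp [neg_sub]
    rw [habs]
    calc |p.1 - p.2| ≤ |p.1| + |-p.2| := by rw [sub_eq_add_neg]; exact abs_add_le _ _
    _ = |p.1| + |p.2| := by rw [abs_neg]
  -- global integrability of f on the product
  have hfint : Integrable f (ρ.prod volume) := by
    rw [integrable_prod_iff hmf.aestronglyMeasurable]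
    refine ⟨ae_of_all _ fun p => hslice p, ?_⟩
    have hg : Integrable (fun p : ℝ × ℝ => |p.1| + |p.2|) ρ :=
      ((integrable_comp_fst P Q hP).abs).add ((integrable_comp_snd P Q hQ).abs)
    refine hg.mono' (hmf.norm.aestronglyMeasurable.integral_prod_right')
      (ae_of_all _ fun p => ?_)
    rw [Real.norm_of_nonneg (integral_nonneg fun k => norm_nonneg _)]
    exact hbound p
  -- representation of the price difference as an integral over ρ
  have hindP : ∀ k : ℝ, Integrable ((Set.Ici k).indicator (fun _ => (1:ℝ))) P :=
    fun k => (integrable_const (1:ℝ)).indicator measurableSet_Ici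
  have hindQ : ∀ k : ℝ, Integrable ((Set.Ici k).indicator (fun _ => (1:ℝ))) Q :=
    fun k => (integrable_const (1:ℝ)).indicator measurableSet_Ici
  have hrepr : ∀ k : ℝ, (P (Set.Ici k)).toReal - (Q (Set.Ici k)).toReal = ∫ p, f (p, k) ∂ρ := by
    intro k
    have hpt : (fun p : ℝ × ℝ => f (p, k)) = fun p : ℝ × ℝ =>
        (Set.Ici k).indicator (fun _ => (1:ℝ)) p.1 - (Set.Ici k).indicator (fun _ => (1:ℝ)) p.2 := by
      funext p
      exact ind_diff p.1 p.2 k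
    rw [hpt, integral_sub (integrable_comp_fst P Q (hindP k)) (integrable_comp_snd P Q (hindQ k)),
      integral_comp_fst P Q (hindP k).aestronglyMeasurable,
      integral_comp_snd P Q (hindQ k).aestronglyMeasurable,
      integral_indicator measurableSet_Ici, integral_indicator measurableSet_Ici,
      setIntegral_const, setIntegral_const]
    simp
    rfl
  constructor
  · refine (hfint.integral_prod_right).congr (ae_of_all _ fun k => ?_)
    exact (hrepr k).symm
  · intro z hz
    have hc : (Complex.I * (z:ℂ)) ≠ 0 :=
      mul_ne_zero Complex.I_ne_zero (Complex.ofReal_ne_zero.2 hz)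
    set Ψ : (ℝ × ℝ) × ℝ → ℂ := fun q => Complex.exp (Complex.I * z * q.2) * ((f q : ℝ) : ℂ)
      with hΨdef
    have hΨm : AEStronglyMeasurable Ψ (ρ.prod volume) := by
      apply Measurable.aestronglyMeasurable
      exact (((Complex.measurable_ofReal.comp measurable_snd).const_mul
        (Complex.I * z)).cexp).mul (Complex.measurable_ofReal.comp hmf)
    have hnorm : ∀ q, ‖Ψ q‖ = ‖f q‖ := by
      intro q
      rw [hΨdef]
      simp only [norm_mul, Complex.norm_real]
      rw [Complex.norm_exp]
      simp [Complex.mul_re]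
    have hΨint : Integrable Ψ (ρ.prod volume) := by
      refine hfint.norm.mono' hΨm (ae_of_all _ fun q => ?_)
      exact le_of_eq (hnorm q)
    have hexpint : ∀ (R : Measure ℝ) [IsProbabilityMeasure R],
        Integrable (fun x : ℝ => Complex.exp (Complex.I * z * x)) R := by
      intro R _
      refine (integrable_const (1:ℝ)).mono' ?_ (ae_of_all _ fun x => ?_)
      · apply Measurable.aestronglyMeasurable
        exact ((Complex.measurable_ofReal.const_mul (Complex.I * z)).cexp)
      · rw [Complex.norm_exp]
        simp [Complex.mul_re]
    -- pointwise inner integral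
    have hinner : ∀ p : ℝ × ℝ, (∫ k, Ψ (p, k))
        = (Complex.exp (Complex.I * z * p.1) - Complex.exp (Complex.I * z * p.2))
          / (Complex.I * z) := by
      intro p
      have hptC : ∀ k : ℝ, Ψ (p, k)
          = (Set.Ioc p.2 p.1).indicator (fun t : ℝ => Complex.exp (Complex.I * z * t)) k
            - (Set.Ioc p.1 p.2).indicator (fun t : ℝ => Complex.exp (Complex.I * z * t)) k := by
        intro k
        simp only [hΨdef, hfdef, Set.indicator_apply]
        split_ifs <;> push_cast <;> ring
      have hcont : Continuous (fun t : ℝ => Complex.exp (Complex.I * z * t)) :=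
        Complex.continuous_exp.comp (continuous_const.mul Complex.continuous_ofReal)
      have hi1 : Integrable ((Set.Ioc p.2 p.1).indicator
          (fun t : ℝ => Complex.exp (Complex.I * z * t))) volume :=
        (integrable_indicator_iff measurableSet_Ioc).2 hcont.integrableOn_Ioc
      have hi2 : Integrable ((Set.Ioc p.1 p.2).indicator
          (fun t : ℝ => Complex.exp (Complex.I * z * t))) volume :=
        (integrable_indicator_iff measurableSet_Ioc).2 hcont.integrableOn_Ioc
      calc (∫ k, Ψ (p, k))
          = ∫ k, ((Set.Ioc p.2 p.1).indicator (fun t : ℝ => Complex.exp (Complex.I * z * t)) k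
            - (Set.Ioc p.1 p.2).indicator (fun t : ℝ => Complex.exp (Complex.I * z * t)) k) := by
            simp_rw [hptC]
        _ = (∫ k in Set.Ioc p.2 p.1, Complex.exp (Complex.I * z * k))
            - ∫ k in Set.Ioc p.1 p.2, Complex.exp (Complex.I * z * k) := by
            rw [integral_sub hi1 hi2, integral_indicator measurableSet_Ioc,
              integral_indicator measurableSet_Ioc]
        _ = ∫ k in p.2..p.1, Complex.exp (Complex.I * z * k) := rfl
        _ = (Complex.exp (Complex.I * z * p.1) - Complex.exp (Complex.I * z * p.2))
            / (Complex.I * z) := by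
            have := integral_exp_mul_complex (a := p.2) (b := p.1) hc
            simpa [mul_assoc] using this
    -- put everything together
    have lhs_eq : ∀ k : ℝ, Complex.exp (Complex.I * z * k) *
        (((P (Set.Ici k)).toReal - (Q (Set.Ici k)).toReal : ℝ) : ℂ) = ∫ p, Ψ (p, k) ∂ρ := by
      intro k
      have hcast : ((∫ p, f (p, k) ∂ρ : ℝ) : ℂ) = ∫ p, ((f (p, k) : ℝ) : ℂ) ∂ρ := by
        exact (integral_ofReal (𝕜 := ℂ)).symm
      rw [hrepr k, hcast, ← integral_const_mul]
    have hswap := integral_integral_swap (f := fun p k => Ψ (p, k)) (μ := ρ) (ν := volume)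
      (by exact hΨint)
    calc ∫ k : ℝ, Complex.exp (Complex.I * z * k) *
          (((P (Set.Ici k)).toReal - (Q (Set.Ici k)).toReal : ℝ) : ℂ)
        = ∫ k : ℝ, ∫ p, Ψ (p, k) ∂ρ := by simp_rw [lhs_eq]
      _ = ∫ p, (∫ k, Ψ (p, k)) ∂ρ := hswap.symm
      _ = ∫ p, (Complex.exp (Complex.I * z * p.1) - Complex.exp (Complex.I * z * p.2))
            / (Complex.I * z) ∂ρ := by simp_rw [hinner]
      _ = (∫ p, (Complex.exp (Complex.I * z * p.1) - Complex.exp (Complex.I * z * p.2)) ∂ρ)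
            / (Complex.I * z) := integral_div _ _
      _ = ((∫ x, Complex.exp (Complex.I * z * x) ∂P) - ∫ x, Complex.exp (Complex.I * z * x) ∂Q)
            / (Complex.I * z) := by
            rw [integral_sub (integrable_comp_fst P Q (hexpint P))
              (integrable_comp_snd P Q (hexpint Q)),
              integral_comp_fst P Q (hexpint P).aestronglyMeasurable,
              integral_comp_snd P Q (hexpint Q).aestronglyMeasurable]
      _ = (1 / (Complex.I * z)) *
          ((∫ x, Complex.exp (Complex.I * z * x) ∂P) - ∫ x, Complex.exp (Complex.I * z * x) ∂Q) := by
            ring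



end Aux

/-- SOA (smooth offset) Fourier transform identity for digital options
(digital case of the paper's Theorem 3.1). -/
theorem soa_digital
    {Ω : Type*} [MeasurableSpace Ω] (μ : Measure Ω) [IsProbabilityMeasure μ]
    (Y : Ω → ℝ) (hYm : Measurable Y)
    (hYint : Integrable Y μ)
    (r T : ℝ) (hT : 0 < T)
    (V Vwedge Vhat : ℝ → ℝ)
    (hV : ∀ k, V k = Real.exp (-(r * T)) * (μ {ω | k ≤ r * T + Y ω}).toReal)
    (hVwedge : ∀ k, Vwedge k = Real.exp (-(r * T)) *
      ((gaussianReal (-(T / 2)) (Real.toNNReal T)) {y | k ≤ r * T + y}).toReal)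
    (hVhat : ∀ k, Vhat k = V k - Vwedge k) :
    Integrable Vhat volume ∧
      ∀ z : ℝ, z ≠ 0 →
        ∫ k : ℝ, Complex.exp (Complex.I * z * k) * (Vhat k : ℂ) =
          (1 / (Complex.I * z)) * Complex.exp ((Complex.I * z - 1) * (r * T)) *
            ((∫ ω, Complex.exp (Complex.I * z * (Y ω : ℂ)) ∂μ) -
              Complex.exp (-(T / 2) * (Complex.I * z + (z : ℂ) ^ 2))) := by
  have hv : Real.toNNReal T ≠ 0 := by
    simp only [ne_eq, Real.toNNReal_eq_zero, not_le]
    exact hT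
  have hvT : ((Real.toNNReal T : ℝ≥0) : ℝ) = T := Real.coe_toNNReal T hT.le
  set ν : Measure ℝ := gaussianReal (-(T / 2)) (Real.toNNReal T) with hνdef
  set P : Measure ℝ := Measure.map (fun ω => r * T + Y ω) μ with hPdef
  have hmg : Measurable (fun ω => r * T + Y ω) := measurable_const.add hYm
  haveI : IsProbabilityMeasure P := Measure.isProbabilityMeasure_map hmg.aemeasurable
  set Q : Measure ℝ := gaussianReal (-(T / 2) + r * T) (Real.toNNReal T) with hQdef
  have hQmap : Measure.map (fun y : ℝ => r * T + y) ν = Q := by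
    rw [hνdef, hQdef]
    exact gaussianReal_map_const_add (μ := -(T / 2)) (v := Real.toNNReal T) (r * T)
  have hP_id : Integrable (fun x : ℝ => x) P := by
    rw [hPdef]
    exact (integrable_map_measure (g := fun x : ℝ => x) aestronglyMeasurable_id
      hmg.aemeasurable).2 ((integrable_const (r * T)).add hYint)
  have hQ_id : Integrable (fun x : ℝ => x) Q := gauss_integrable_id _ _
  have hkey := key P Q hP_id hQ_id
  have hVId : ∀ k, Vhat k
      = Real.exp (-(r * T)) * ((P (Set.Ici k)).toReal - (Q (Set.Ici k)).toReal) := by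
    intro k
    rw [hVhat, hV, hVwedge]
    have e1 : P (Set.Ici k) = μ {ω | k ≤ r * T + Y ω} := by
      rw [hPdef, Measure.map_apply hmg measurableSet_Ici]
      rfl
    have e2 : Q (Set.Ici k) = ν {y | k ≤ r * T + y} := by
      have hma : Measurable (fun y : ℝ => r * T + y) := measurable_const.add measurable_id
      rw [← hQmap, Measure.map_apply hma measurableSet_Ici]
      rfl
    rw [e1, e2]
    ring
  constructor
  · refine (hkey.1.const_mul (Real.exp (-(r * T)))).congr (ae_of_all _ fun k => ?_)
    exact (hVId k).symm
  · intro z hz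
    have hL : ∀ k : ℝ, Complex.exp (Complex.I * z * k) * ((Vhat k : ℝ) : ℂ)
        = ((Real.exp (-(r * T)) : ℝ) : ℂ) * (Complex.exp (Complex.I * z * k) *
            (((P (Set.Ici k)).toReal - (Q (Set.Ici k)).toReal : ℝ) : ℂ)) := by
      intro k
      rw [hVId k]
      push_cast
      ring
    have hchP : (∫ x, Complex.exp (Complex.I * z * x) ∂P)
        = Complex.exp (Complex.I * z * ((r * T : ℝ) : ℂ)) *
            ∫ ω, Complex.exp (Complex.I * z * (Y ω : ℂ)) ∂μ := by
      rw [hPdef, integral_map hmg.aemeasurable (by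
        apply Measurable.aestronglyMeasurable
        exact (Complex.measurable_ofReal.const_mul (Complex.I * z)).cexp)]
      have hsplit : ∀ ω, Complex.exp (Complex.I * z * ((r * T + Y ω : ℝ) : ℂ))
          = Complex.exp (Complex.I * z * ((r * T : ℝ) : ℂ)) *
              Complex.exp (Complex.I * z * (Y ω : ℂ)) := by
        intro ω
        rw [← Complex.exp_add]
        congr 1
        push_cast
        ring
      simp_rw [hsplit]
      rw [integral_const_mul]
    have hchQ : (∫ x, Complex.exp (Complex.I * z * x) ∂Q)
        = Complex.exp (Complex.I * z * ((r * T : ℝ) : ℂ)) *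
            Complex.exp (-(T / 2 : ℂ) * (Complex.I * z + (z : ℂ) ^ 2)) := by
      rw [hQdef, gauss_charfun _ hv z, ← Complex.exp_add]
      congr 1
      rw [hvT]
      push_cast
      ring
    have hmulexp : ((Real.exp (-(r * T)) : ℝ) : ℂ) *
        Complex.exp (Complex.I * z * ((r * T : ℝ) : ℂ))
          = Complex.exp ((Complex.I * z - 1) * (r * T)) := by
      rw [Complex.ofReal_exp, ← Complex.exp_add]
      congr 1
      push_cast
      ring
    calc ∫ k : ℝ, Complex.exp (Complex.I * z * k) * ((Vhat k : ℝ) : ℂ)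
        = ∫ k : ℝ, ((Real.exp (-(r * T)) : ℝ) : ℂ) * (Complex.exp (Complex.I * z * k) *
            (((P (Set.Ici k)).toReal - (Q (Set.Ici k)).toReal : ℝ) : ℂ)) := by
          simp_rw [hL]
      _ = ((Real.exp (-(r * T)) : ℝ) : ℂ) * ∫ k : ℝ, Complex.exp (Complex.I * z * k) *
            (((P (Set.Ici k)).toReal - (Q (Set.Ici k)).toReal : ℝ) : ℂ) := integral_const_mul _ _
      _ = ((Real.exp (-(r * T)) : ℝ) : ℂ) * ((1 / (Complex.I * z)) *
            ((∫ x, Complex.exp (Complex.I * z * x) ∂P)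
              - ∫ x, Complex.exp (Complex.I * z * x) ∂Q)) := by
          rw [hkey.2 z hz]
      _ = (1 / (Complex.I * z)) * (((Real.exp (-(r * T)) : ℝ) : ℂ) *
            Complex.exp (Complex.I * z * ((r * T : ℝ) : ℂ))) *
            ((∫ ω, Complex.exp (Complex.I * z * (Y ω : ℂ)) ∂μ) -
              Complex.exp (-(T / 2 : ℂ) * (Complex.I * z + (z : ℂ) ^ 2))) := by
          rw [hchP, hchQ]
          ring
      _ = (1 / (Complex.I * z)) * Complex.exp ((Complex.I * z - 1) * (r * T)) *
            ((∫ ω, Complex.exp (Complex.I * z * (Y ω : ℂ)) ∂μ) -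
              Complex.exp (-(T / 2) * (Complex.I * z + (z : ℂ) ^ 2))) := by
          rw [hmulexp]
end

section
/- Let t > 0, ν > 0, σ > 0 and θ ∈ ℝ with θν + (1/2)σ²ν < 1. Let G be a Gamma-distributed random variable with shape t/ν and rate 1/ν, let Z be a standard normal random variable independent of G, and set Y = θG + σ√G · Z. Then e^Y is integrable with 𝔼[e^Y] = (1 − θν − (1/2)σ²ν)^{−t/ν}; consequently, with the compensator ζ = (1/ν)·ln(1 − θν − (1/2)σ²ν), one has 𝔼[e^{ζt + Y}] = 1. -/
open MeasureTheory Complex Real ProbabilityTheory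

open scoped ENNReal NNReal

section Aux

lemma vg_integral_withDensity_ofReal {p : ℝ → ℝ} (hp : Measurable p) (hp0 : ∀ x, 0 ≤ p x)
    (g : ℝ → ℝ) :
    ∫ x, g x ∂(volume.withDensity fun x => ENNReal.ofReal (p x)) = ∫ x, g x * p x := by
  have h : (fun x => ENNReal.ofReal (p x)) = fun x => ((Real.toNNReal (p x) : ℝ≥0) : ℝ≥0∞) := rfl
  rw [h, integral_withDensity_eq_integral_smul hp.real_toNNReal g]
  congr 1
  ext x
  simp [NNReal.smul_def, Real.coe_toNNReal _ (hp0 x), mul_comm]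

lemma vg_integrable_withDensity_ofReal {p : ℝ → ℝ} (hp : Measurable p) (hp0 : ∀ x, 0 ≤ p x)
    {g : ℝ → ℝ} (hg : Integrable (fun x => g x * p x) volume) :
    Integrable g (volume.withDensity fun x => ENNReal.ofReal (p x)) := by
  rw [integrable_withDensity_iff hp.ennreal_ofReal
    (ae_of_all _ fun x => ENNReal.ofReal_lt_top)]
  have h : (fun x => g x * (ENNReal.ofReal (p x)).toReal) = fun x => g x * p x := by
    funext x; rw [ENNReal.toReal_ofReal (hp0 x)]
  rw [h]
  exact hg

/-- Moment generating function of the standard Gaussian. -/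
lemma vg_gauss_exp (c : ℝ) :
    Integrable (fun y => Real.exp (c * y)) (gaussianReal 0 1) ∧
    ∫ y, Real.exp (c * y) ∂(gaussianReal 0 1) = Real.exp (c ^ 2 / 2) := by
  rw [gaussianReal_of_var_ne_zero 0 one_ne_zero]
  have hpdf_def : gaussianPDF 0 1 = fun x => ENNReal.ofReal (gaussianPDFReal 0 1 x) := rfl
  have hpdfm : Measurable (gaussianPDFReal 0 1) := measurable_gaussianPDFReal 0 1
  have hpdf0 : ∀ x, 0 ≤ gaussianPDFReal 0 1 x := fun x => gaussianPDFReal_nonneg 0 1 x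
  set K : ℝ := (Real.sqrt (2 * π))⁻¹ * Real.exp (c ^ 2 / 2) with hK
  have hfun : (fun y => Real.exp (c * y) * gaussianPDFReal 0 1 y)
      = fun y => K * Real.exp (-(1/2) * (y - c) ^ 2) := by
    funext y
    simp only [gaussianPDFReal, NNReal.coe_one, mul_one, sub_zero, hK]
    rw [mul_comm (Real.exp (c * y)), mul_assoc, mul_assoc, ← Real.exp_add, ← Real.exp_add]
    congr 2
    ring
  have hint : Integrable (fun y => Real.exp (c * y) * gaussianPDFReal 0 1 y) volume := by
    rw [hfun]
    exact ((integrable_exp_neg_mul_sq (by norm_num : (0:ℝ) < 1/2)).comp_sub_right c).const_mul K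
  constructor
  · rw [hpdf_def]
    exact vg_integrable_withDensity_ofReal hpdfm hpdf0 hint
  · rw [hpdf_def, vg_integral_withDensity_ofReal hpdfm hpdf0, hfun,
      integral_const_mul,
      integral_sub_right_eq_self (μ := volume) (fun y => Real.exp (-(1/2) * y ^ 2)) c,
      integral_gaussian]
    have h2π : Real.sqrt (π / (1/2)) = Real.sqrt (2 * π) := by
      norm_num [mul_comm]
    rw [h2π, hK]
    have hpos : (0:ℝ) < Real.sqrt (2 * π) := Real.sqrt_pos.2 (by positivity)
    field_simp

/-- Moment generating function of the Gamma distribution. -/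
lemma vg_gamma_exp {a r s : ℝ} (ha : 0 < a) (hr : 0 < r) (hs : s < r) :
    Integrable (fun x => Real.exp (s * x)) (gammaMeasure a r) ∧
    ∫ x, Real.exp (s * x) ∂(gammaMeasure a r) = (1 - s / r) ^ (-a) := by
  have hrs : 0 < r - s := by linarith
  have hpdfm : Measurable (gammaPDFReal a r) := measurable_gammaPDFReal a r
  have hpdf0 : ∀ x, 0 ≤ gammaPDFReal a r x := gammaPDFReal_nonneg ha hr
  have hmeas_def : gammaMeasure a r = volume.withDensity fun x =>
      ENNReal.ofReal (gammaPDFReal a r x) := rfl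
  set C : ℝ := r ^ a / Real.Gamma a with hC
  have hfun : (fun x => Real.exp (s * x) * gammaPDFReal a r x)
      = Set.indicator (Set.Ici 0) (fun x => C * (x ^ (a - 1) * Real.exp (-((r - s) * x)))) := by
    funext x
    simp only [gammaPDFReal, Set.indicator_apply, Set.mem_Ici]
    split_ifs with h
    · rw [mul_comm (Real.exp (s * x)), mul_assoc, ← Real.exp_add]
      rw [hC]
      ring_nf
    · rw [mul_zero]
  have hIoi : IntegrableOn (fun x => C * (x ^ (a - 1) * Real.exp (-((r - s) * x))))
      (Set.Ioi 0) volume := by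
    refine (Integrable.const_mul ?_ C)
    have h0 := integrableOn_rpow_mul_exp_neg_mul_rpow (p := 1) (s := a - 1) (b := r - s)
      (by linarith) zero_lt_one hrs
    refine h0.congr_fun (fun x hx => ?_) measurableSet_Ioi
    simp only [Real.rpow_one]
    ring_nf
  have hint : Integrable (fun x => Real.exp (s * x) * gammaPDFReal a r x) volume := by
    rw [hfun]
    rw [integrable_indicator_iff measurableSet_Ici]
    exact Iff.mpr integrableOn_Ici_iff_integrableOn_Ioi hIoi
  constructor
  · rw [hmeas_def]
    exact vg_integrable_withDensity_ofReal hpdfm hpdf0 hint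
  · rw [hmeas_def, vg_integral_withDensity_ofReal hpdfm hpdf0, hfun,
      integral_indicator measurableSet_Ici, integral_Ici_eq_integral_Ioi,
      integral_const_mul, integral_rpow_mul_exp_neg_mul_Ioi ha hrs]
    have hΓ : Real.Gamma a ≠ 0 := (Real.Gamma_pos_of_pos ha).ne'
    have h1 : 1 - s / r = (r - s) / r := by field_simp
    rw [h1, Real.rpow_neg (by positivity), Real.div_rpow hrs.le hr.le,
      Real.div_rpow zero_le_one hrs.le, Real.one_rpow]
    rw [hC]
    have hr_pow : (0:ℝ) < r ^ a := Real.rpow_pos_of_pos hr a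
    have hrs_pow : (0:ℝ) < (r - s) ^ a := Real.rpow_pos_of_pos hrs a
    field_simp

end Aux

set_option maxHeartbeats 1000000

/-- Martingale compensator for the exponential variance Gamma model: if
`G ~ Gamma(t/ν, 1/ν)`, `Z ~ N(0,1)` independent of `G`, `Y = θG + σ√G·Z` and
`θν + ½σ²ν < 1`, then `e^Y` is integrable with
`𝔼[e^Y] = (1 - θν - ½σ²ν)^{-t/ν}`, and with `ζ = (1/ν)·ln(1 - θν - ½σ²ν)` one has
`𝔼[e^{ζt + Y}] = 1`. -/
theorem varianceGamma_compensator
    {Ω : Type*} [MeasurableSpace Ω] (μ : Measure Ω) [IsProbabilityMeasure μ]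
    (t ν σ θ : ℝ) (ht : 0 < t) (hν : 0 < ν) (hσ : 0 < σ)
    (hlt : θ * ν + σ ^ 2 * ν / 2 < 1)
    (G Z : Ω → ℝ) (hGm : Measurable G) (hZm : Measurable Z)
    (hG : Measure.map G μ = gammaMeasure (t / ν) (1 / ν))
    (hZ : Measure.map Z μ = gaussianReal 0 1)
    (hindep : IndepFun G Z μ) :
    Integrable (fun ω => Real.exp (θ * G ω + σ * Real.sqrt (G ω) * Z ω)) μ ∧
    ∫ ω, Real.exp (θ * G ω + σ * Real.sqrt (G ω) * Z ω) ∂μ =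
      (1 - θ * ν - σ ^ 2 * ν / 2) ^ (-(t / ν)) ∧
    ∫ ω, Real.exp ((1 / ν) * Real.log (1 - θ * ν - σ ^ 2 * ν / 2) * t +
        (θ * G ω + σ * Real.sqrt (G ω) * Z ω)) ∂μ = 1 := by
  have ha : 0 < t / ν := div_pos ht hν
  have hr : 0 < 1 / ν := by positivity
  set s : ℝ := θ + σ ^ 2 / 2 with hs_def
  have hsr : s < 1 / ν := by
    rw [lt_div_iff₀ hν, hs_def]
    nlinarith
  set K : ℝ := 1 - θ * ν - σ ^ 2 * ν / 2 with hK_def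
  have hKs : K = 1 - s / (1 / ν) := by
    field_simp [hK_def, hs_def]
    ring
  have hK0 : 0 < K := by
    rw [hK_def]; linarith
  set γ : Measure ℝ := gammaMeasure (t / ν) (1 / ν) with hγ
  set g : Measure ℝ := gaussianReal 0 1 with hg
  haveI : IsProbabilityMeasure γ := isProbabilityMeasure_gammaMeasure ha hr
  haveI : IsProbabilityMeasure g := inferInstanceAs (IsProbabilityMeasure (gaussianReal 0 1))
  -- joint law
  have h_map : μ.map (fun ω => (G ω, Z ω)) = γ.prod g := by
    rw [← hG, ← hZ]
    exact (indepFun_iff_map_prod_eq_prod_map_map hGm.aemeasurable hZm.aemeasurable).mp hindep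
  set F : ℝ × ℝ → ℝ := fun p => Real.exp (θ * p.1 + σ * Real.sqrt p.1 * p.2) with hF
  have hFm : Measurable F := by
    apply Measurable.exp
    fun_prop
  obtain ⟨hγint, hγval⟩ := vg_gamma_exp ha hr hsr
  -- a.e. nonnegativity under the gamma measure
  have hγ0 : ∀ᵐ x ∂γ, 0 ≤ x := by
    rw [ae_iff]
    have hset : {x : ℝ | ¬ 0 ≤ x} = Set.Iio 0 := by ext x; simp
    rw [hset, hγ, gammaMeasure, withDensity_apply _ measurableSet_Iio]
    exact lintegral_gammaPDF_of_nonpos le_rfl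
  -- inner Gaussian integral
  have hinner : ∀ x : ℝ, ∫⁻ y, ENNReal.ofReal (F (x, y)) ∂g
      = ENNReal.ofReal (Real.exp (θ * x + σ ^ 2 * Real.sqrt x ^ 2 / 2)) := by
    intro x
    obtain ⟨hci, hcv⟩ := vg_gauss_exp (σ * Real.sqrt x)
    have hfe : (fun y => F (x, y))
        = fun y => Real.exp (θ * x) * Real.exp (σ * Real.sqrt x * y) := by
      funext y; rw [hF, ← Real.exp_add]
    have hci' : Integrable (fun y => F (x, y)) g := by
      rw [hfe, hg]; exact hci.const_mul _
    rw [← ofReal_integral_eq_lintegral_ofReal hci'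
        (ae_of_all _ fun y => (Real.exp_pos _).le)]
    congr 1
    rw [hfe, hg, integral_const_mul, hcv, ← Real.exp_add, mul_pow]
  -- the lintegral over the product measure
  have hL : ∫⁻ p, ENNReal.ofReal (F p) ∂(γ.prod g) = ENNReal.ofReal (K ^ (-(t / ν))) := by
    rw [MeasureTheory.lintegral_prod _ hFm.ennreal_ofReal.aemeasurable]
    have h1 : ∫⁻ x, ∫⁻ y, ENNReal.ofReal (F (x, y)) ∂g ∂γ
        = ∫⁻ x, ENNReal.ofReal (Real.exp (s * x)) ∂γ := by
      refine lintegral_congr_ae ?_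
      filter_upwards [hγ0] with x hx
      rw [hinner x, Real.sq_sqrt hx]
      congr 2
      rw [hs_def]; ring
    rw [h1, ← ofReal_integral_eq_lintegral_ofReal hγint
        (ae_of_all _ fun x => (Real.exp_pos _).le), hγval, ← hKs]
  -- transport to Ω
  have hμL : ∫⁻ ω, ENNReal.ofReal (Real.exp (θ * G ω + σ * Real.sqrt (G ω) * Z ω)) ∂μ
      = ENNReal.ofReal (K ^ (-(t / ν))) := by
    have : ∫⁻ ω, ENNReal.ofReal (F (G ω, Z ω)) ∂μ
        = ∫⁻ p, ENNReal.ofReal (F p) ∂(μ.map (fun ω => (G ω, Z ω))) :=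
      (lintegral_map hFm.ennreal_ofReal (hGm.prodMk hZm)).symm
    rw [show (fun ω => ENNReal.ofReal (Real.exp (θ * G ω + σ * Real.sqrt (G ω) * Z ω)))
        = fun ω => ENNReal.ofReal (F (G ω, Z ω)) from rfl, this, h_map, hL]
  have hmeasΩ : Measurable (fun ω => Real.exp (θ * G ω + σ * Real.sqrt (G ω) * Z ω)) := by
    apply Measurable.exp
    fun_prop
  have hInt : Integrable (fun ω => Real.exp (θ * G ω + σ * Real.sqrt (G ω) * Z ω)) μ := by
    refine ⟨hmeasΩ.aestronglyMeasurable, ?_⟩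
    rw [hasFiniteIntegral_iff_ofReal (ae_of_all _ fun ω => (Real.exp_pos _).le), hμL]
    exact ENNReal.ofReal_lt_top
  have hIntval : ∫ ω, Real.exp (θ * G ω + σ * Real.sqrt (G ω) * Z ω) ∂μ = K ^ (-(t / ν)) := by
    rw [integral_eq_lintegral_of_nonneg_ae (ae_of_all _ fun ω => (Real.exp_pos _).le)
        hmeasΩ.aestronglyMeasurable, hμL,
      ENNReal.toReal_ofReal (Real.rpow_nonneg hK0.le _)]
  refine ⟨hInt, hIntval, ?_⟩
  have hconst : ∀ ω : Ω, Real.exp ((1 / ν) * Real.log K * t +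
      (θ * G ω + σ * Real.sqrt (G ω) * Z ω))
      = Real.exp ((1 / ν) * Real.log K * t) *
        Real.exp (θ * G ω + σ * Real.sqrt (G ω) * Z ω) := fun ω => Real.exp_add _ _
  simp_rw [hconst]
  rw [integral_const_mul, hIntval]
  have hKe : Real.exp ((1 / ν) * Real.log K * t) = K ^ (t / ν) := by
    rw [Real.rpow_def_of_pos hK0]
    congr 1
    ring
  rw [hKe, ← Real.rpow_add hK0, add_neg_cancel, Real.rpow_zero]
end
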